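/- arXiv:1911.11628 — 3 statements merged into one kernel-verified Lean document; each statement's English description precedes it below -/
import Mathlib

section
/- Let σ : ℝⁿ → ℝ^{n×m} be of class C² and u : ℝⁿ → ℝ of class C³. Let x̄ ∈ ℝⁿ be such that ∇u(x̄) ≠ 0 and ᵗσ(x̄)∇u(x̄) = 0, and suppose the matrix K(x̄) has a negative eigenvalue. Then the target 𝒯 = {x : u(x) ≤ u(x̄)} is STLA for the symmetric system ẋ_t = σ(x_t)a_t at x̄, and there exist C, δ > 0 such that the minimum time function satisfies T(x) ≤ C|x − x̄|^{1/2} for all x ∈ B_δ(x̄); moreover, if (a₁,a₂) is an eigenvector of K(x̄) with minimal eigenvalue, the controls a₁, a₂ determine two vector fields σa₁, σa₂ whose single-switch trajectories reach the target in finite time. -/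
open Set Filter Metric Matrix MeasureTheory Asymptotics
open scoped RealInnerProductSpace ENNReal Topology

noncomputable section

/-- Euclidean `n`-space. -/
abbrev Euc (n : ℕ) : Type := EuclideanSpace ℝ (Fin n)

/-- The Lie bracket `[f,g](x) = Dg(x) f(x) - Df(x) g(x)`. -/
def lieBracket {n : ℕ} (f g : Euc n → Euc n) (x : Euc n) : Euc n :=
  fderiv ℝ g x (f x) - fderiv ℝ f x (g x)

/-- Second-order Hamiltonian `H_{f,g} u (x) = ∇(∇u·g)(x) · f(x)`. -/
def H2 {n : ℕ} (f g : Euc n → Euc n) (u : Euc n → ℝ) (x : Euc n) : ℝ :=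
  fderiv ℝ (fun y => ⟪gradient u y, g y⟫) x (f x)

/-- Single-switch trajectory with data `(f, g, t, x₀)`: Carathéodory solution following `f`
on `[0,t)` and `g` on `[t,2t]`, starting at `x₀`. -/
def IsSwitchTraj {n : ℕ} (f g : Euc n → Euc n) (t : ℝ) (x₀ : Euc n) (x : ℝ → Euc n) : Prop :=
  x 0 = x₀ ∧ ContinuousOn x (Icc 0 (2 * t)) ∧
    (∀ s ∈ Ioo (0 : ℝ) t, HasDerivAt x (f (x s)) s) ∧
    (∀ s ∈ Ioo t (2 * t), HasDerivAt x (g (x s)) s)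

/-- Piecewise continuity: on every bounded interval, continuity off a finite set. -/
def PiecewiseContinuous {m : ℕ} (a : ℝ → Euc m) : Prop :=
  ∀ T > (0 : ℝ), ∃ D : Finset ℝ, ∀ t ∈ Icc (0 : ℝ) T, t ∉ D → ContinuousAt a t

/-- Admissible control with values in the control set `A`. -/
def IsControl {m : ℕ} (A : Set (Euc m)) (a : ℝ → Euc m) : Prop :=
  (∀ s, a s ∈ A) ∧ PiecewiseContinuous a

/-- Carathéodory trajectory of the control system `ẋ = f(x,a)`. -/
def IsTraj {n m : ℕ} (f : Euc n → Euc m → Euc n) (A : Set (Euc m))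
    (a : ℝ → Euc m) (x : ℝ → Euc n) : Prop :=
  IsControl A a ∧ ContinuousOn x (Ici 0) ∧
    ∀ t : ℝ, 0 ≤ t → x t = x 0 + ∫ s in (0 : ℝ)..t, f (x s) (a s)

/-- Points from which the target `𝒯` can be reached within time `t`. -/
def ReachSet {n m : ℕ} (f : Euc n → Euc m → Euc n) (A : Set (Euc m)) (𝒯 : Set (Euc n))
    (t : ℝ) : Set (Euc n) :=
  {x₀ | ∃ (a : ℝ → Euc m) (x : ℝ → Euc n) (t' : ℝ),
    IsTraj f A a x ∧ x 0 = x₀ ∧ 0 ≤ t' ∧ t' ≤ t ∧ x t' ∈ 𝒯}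

/-- Minimum time function, valued in `ℝ≥0∞`. -/
def minTime {n m : ℕ} (f : Euc n → Euc m → Euc n) (A : Set (Euc m)) (𝒯 : Set (Euc n))
    (x₀ : Euc n) : ℝ≥0∞ :=
  sInf {θ : ℝ≥0∞ | ∃ (a : ℝ → Euc m) (x : ℝ → Euc n) (t : ℝ),
    IsTraj f A a x ∧ x 0 = x₀ ∧ 0 ≤ t ∧ x t ∈ 𝒯 ∧ θ = ENNReal.ofReal t}

/-- Small time local attainability of the target `𝒯` at `xbar`. -/
def STLA {n m : ℕ} (f : Euc n → Euc m → Euc n) (A : Set (Euc m)) (𝒯 : Set (Euc n))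
    (xbar : Euc n) : Prop :=
  ∀ t > (0 : ℝ), xbar ∈ interior (ReachSet f A 𝒯 t)

/-- `C^k` controlled vector field: `C^k` in `x` with spatial derivatives jointly continuous. -/
def VFieldC {n m : ℕ} (k : ℕ) (f : Euc n → Euc m → Euc n) : Prop :=
  (∀ a, ContDiff ℝ k fun x => f x a) ∧
    ∀ i ≤ k, Continuous fun p : Euc n × Euc m => iteratedFDeriv ℝ i (fun x => f x p.2) p.1

/-- The second-order controllability expression
`-D²u(x) f(x,a₁)·f(x,a₂) - (D(f(·,a₁)+f(·,a₂))(x)(f(x,a₁)+f(x,a₂)) + [f(·,a₁),f(·,a₂)](x))·∇u(x)`. -/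
def SOexpr {n m : ℕ} (f : Euc n → Euc m → Euc n) (u : Euc n → ℝ) (x : Euc n)
    (a₁ a₂ : Euc m) : ℝ :=
  -⟪fderiv ℝ (gradient u) x (f x a₁), f x a₂⟫ -
    ⟪gradient u x,
      fderiv ℝ (fun y => f y a₁ + f y a₂) x (f x a₁ + f x a₂) +
        lieBracket (fun y => f y a₁) (fun y => f y a₂) x⟫

/-- The target is reached with a piecewise constant control with at most one switch. -/
def ReachOneSwitch {n m : ℕ} (f : Euc n → Euc m → Euc n) (A : Set (Euc m)) (𝒯 : Set (Euc n))
    (x₀ : Euc n) : Prop :=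
  ∃ a₁ ∈ A, ∃ a₂ ∈ A, ∃ ts tf : ℝ, 0 ≤ ts ∧ ts ≤ tf ∧
    ∃ x : ℝ → Euc n, IsTraj f A (fun s => if s < ts then a₁ else a₂) x ∧ x 0 = x₀ ∧ x tf ∈ 𝒯

/-- The matrix `S(x) = D(∇u σ)(x) σ(x)`, i.e. `S_{ij}(x) = ∇(∇u·σᵢ)(x)·σⱼ(x)`. -/
def Smat {n m : ℕ} (σ : Fin m → Euc n → Euc n) (u : Euc n → ℝ) (x : Euc n) :
    Matrix (Fin m) (Fin m) ℝ :=
  Matrix.of fun i j => fderiv ℝ (fun y => ⟪gradient u y, σ i y⟫) x (σ j x)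

/-- The symmetric block matrix `K = [[S*, ᵗS],[S, S*]]` built from a square matrix `S`. -/
def Kof {m : ℕ} (S : Matrix (Fin m) (Fin m) ℝ) :
    Matrix (Fin m ⊕ Fin m) (Fin m ⊕ Fin m) ℝ :=
  Matrix.fromBlocks ((2 : ℝ)⁻¹ • (S + Sᵀ)) Sᵀ S ((2 : ℝ)⁻¹ • (S + Sᵀ))

/-- The matrix `K(x)` associated to `σ` and `u`. -/
def Kmat {n m : ℕ} (σ : Fin m → Euc n → Euc n) (u : Euc n → ℝ) (x : Euc n) :
    Matrix (Fin m ⊕ Fin m) (Fin m ⊕ Fin m) ℝ :=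
  Kof (Smat σ u x)

/-- Symmetric system vector field `f(x,a) = σ(x) a`. -/
def symF {n m : ℕ} (σ : Fin m → Euc n → Euc n) : Euc n → Euc m → Euc n :=
  fun x a => ∑ j, a j • σ j x

/-- Nonlinear affine system vector field `f(x,a) = σ₀(x) + σ(x) a`. -/
def affF {n m : ℕ} (σ₀ : Euc n → Euc n) (σ : Fin m → Euc n → Euc n) :
    Euc n → Euc m → Euc n :=
  fun x a => σ₀ x + ∑ j, a j • σ j x

end

noncomputable section AuxProofs


theorem ode_solve {E : Type*} [NormedAddCommGroup E] [NormedSpace ℝ E] [CompleteSpace E]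
    (F : E → E) (x₀ : E) (T : ℝ) (hT : 0 ≤ T) (L : NNReal) (C : ℝ) (hC : 0 ≤ C)
    (hlip : LipschitzOnWith L F (Metric.closedBall x₀ (C * T)))
    (hbd : ∀ y ∈ Metric.closedBall x₀ (C * T), ‖F y‖ ≤ C) :
    ∃ x : ℝ → E, x 0 = x₀ ∧ Continuous x ∧ (∀ s, x s ∈ Metric.closedBall x₀ (C * T)) ∧
      (∀ s, s ≤ 0 → x s = x₀) ∧ (∀ s, T ≤ s → x s = x T) ∧
      (∀ s ∈ Icc (0 : ℝ) T, HasDerivWithinAt x (F (x s)) (Icc (0 : ℝ) T) s) := by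
  have h0T : (0 : ℝ) ∈ Icc (0 : ℝ) T := ⟨le_rfl, hT⟩
  have hCT : 0 ≤ C * T := mul_nonneg hC hT
  lift C to NNReal using hC
  have hP : IsPicardLindelof (fun _ y => F y) (⟨0, h0T⟩ : Icc (0:ℝ) T) x₀
      (⟨C * T, hCT⟩ : NNReal) 0 C L :=
    IsPicardLindelof.of_time_independent (fun y hy => hbd y hy) hlip
      (by show C * max (T - 0) (0 - 0) ≤ C * T - 0; simp [max_eq_left hT])
  have hx : x₀ ∈ closedBall x₀ ((0 : NNReal) : ℝ) := mem_closedBall_self le_rfl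
  obtain ⟨α, hα⟩ := ODE.FunSpace.exists_isFixedPt_next hP hx
  have hfix : ∀ s : Icc (0:ℝ) T, α.toFun s = ODE.picard (fun _ y => F y) (0:ℝ) x₀ α.compProj s :=
    fun s => (congrArg (fun β : ODE.FunSpace _ _ _ _ => β.toFun s) hα).symm
  have hx0 : α.compProj 0 = x₀ := by
    rw [ODE.FunSpace.compProj_of_mem h0T, hfix, ODE.picard_apply]
    simp
  refine ⟨α.compProj, hx0, α.continuous_compProj, fun s => ?_,
    fun s hs => ?_, fun s hs => ?_, fun s hs => ?_⟩
  · exact ODE.FunSpace.compProj_mem_closedBall α hP.mul_max_le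
  · refine Eq.trans ?_ hx0
    rw [ODE.FunSpace.compProj_apply, ODE.FunSpace.compProj_apply,
      Set.projIcc_of_le_left _ hs, Set.projIcc_of_le_left _ le_rfl]
  · rw [ODE.FunSpace.compProj_apply, ODE.FunSpace.compProj_apply,
      Set.projIcc_of_right_le _ hs, Set.projIcc_of_right_le _ le_rfl]
  · have hFc : ContinuousOn (Function.uncurry fun (_ : ℝ) y => F y)
        (Icc (0:ℝ) T ×ˢ closedBall x₀ (C * T)) :=
      hlip.continuousOn.comp continuousOn_snd (fun p hp => hp.2)
    have hd := ODE.hasDerivWithinAt_picard_Icc (f := fun _ y => F y) h0T hFc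
      α.continuous_compProj.continuousOn
      (fun r _ => ODE.FunSpace.compProj_mem_closedBall α hP.mul_max_le) x₀ hs
    have heq : ∀ y ∈ Icc (0:ℝ) T,
        α.compProj y = ODE.picard (fun _ y => F y) (0:ℝ) x₀ α.compProj y := by
      intro y hy
      rw [ODE.FunSpace.compProj_of_mem hy]
      exact hfix ⟨y, hy⟩
    exact hd.congr heq (heq s hs)


theorem deriv_along {n : ℕ} {g : EuclideanSpace ℝ (Fin n) → ℝ} (hg : ContDiff ℝ 1 g)
    {x : ℝ → EuclideanSpace ℝ (Fin n)} {F : EuclideanSpace ℝ (Fin n) → EuclideanSpace ℝ (Fin n)}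
    {s : ℝ} (hd : HasDerivAt x (F (x s)) s) :
    HasDerivAt (fun r => g (x r)) (fderiv ℝ g (x s) (F (x s))) s :=
  (((hg.differentiable one_ne_zero) (x s)).hasFDerivAt).comp_hasDerivAt s hd

theorem leg_est {n : ℕ} (g : EuclideanSpace ℝ (Fin n) → ℝ) (hg : ContDiff ℝ 1 g)
    (F : EuclideanSpace ℝ (Fin n) → EuclideanSpace ℝ (Fin n))
    (x : ℝ → EuclideanSpace ℝ (Fin n)) (t0 t1 : ℝ) (h01 : t0 ≤ t1)
    (hx : ContinuousOn x (Icc t0 t1))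
    (hd : ∀ s ∈ Ioo t0 t1, HasDerivAt x (F (x s)) s)
    (B : ℝ) (hB : ∀ s ∈ Ioo t0 t1, fderiv ℝ g (x s) (F (x s)) ≤ B) :
    g (x t1) ≤ g (x t0) + B * (t1 - t0) := by
  have key : AntitoneOn (fun s => g (x s) - B * s) (Icc t0 t1) := by
    apply antitoneOn_of_hasDerivWithinAt_nonpos (convex_Icc t0 t1)
      (f' := fun s => fderiv ℝ g (x s) (F (x s)) - B)
    · exact (hg.continuous.comp_continuousOn hx).sub (continuous_const.mul continuous_id).continuousOn
    · intro s hs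
      rw [interior_Icc] at hs
      have h1 : HasDerivAt (fun s => g (x s) - B * s) (fderiv ℝ g (x s) (F (x s)) - B) s := by
        have h := (deriv_along hg (hd s hs)).sub ((hasDerivAt_id s).const_mul B)
        exact h.congr_deriv (by simp)
      exact h1.hasDerivWithinAt
    · intro s hs
      rw [interior_Icc] at hs
      exact sub_nonpos.mpr (hB s hs)
  have h2 := key ⟨le_rfl, h01⟩ ⟨h01, le_rfl⟩ h01
  simp only at h2
  linarith

theorem leg_est2 {n : ℕ} (u g : EuclideanSpace ℝ (Fin n) → ℝ)
    (hu : ContDiff ℝ 1 u) (hg : ContDiff ℝ 1 g)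
    (F : EuclideanSpace ℝ (Fin n) → EuclideanSpace ℝ (Fin n))
    (hrel : ∀ y, fderiv ℝ u y (F y) = g y)
    (x : ℝ → EuclideanSpace ℝ (Fin n)) (t0 t1 : ℝ) (h01 : t0 ≤ t1)
    (hx : ContinuousOn x (Icc t0 t1))
    (hd : ∀ s ∈ Ioo t0 t1, HasDerivAt x (F (x s)) s)
    (B : ℝ) (hB : ∀ s ∈ Ioo t0 t1, fderiv ℝ g (x s) (F (x s)) ≤ B) :
    u (x t1) ≤ u (x t0) + g (x t0) * (t1 - t0) + B / 2 * (t1 - t0) ^ 2 := by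
  have key : AntitoneOn (fun s => u (x s) - g (x t0) * s - B / 2 * (s - t0) ^ 2) (Icc t0 t1) := by
    apply antitoneOn_of_hasDerivWithinAt_nonpos (convex_Icc t0 t1)
      (f' := fun s => g (x s) - g (x t0) - B * (s - t0))
    · refine ((hu.continuous.comp_continuousOn hx).sub
        (continuous_const.mul continuous_id).continuousOn).sub ?_
      exact (continuous_const.mul ((continuous_id.sub continuous_const).pow 2)).continuousOn
    · intro s hs
      rw [interior_Icc] at hs
      have h1 : HasDerivAt (fun r => u (x r)) (g (x s)) s := by
        have := deriv_along hu (hd s hs)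
        rwa [hrel] at this
      have h2 : HasDerivAt (fun s => g (x t0) * s) (g (x t0)) s := by
        simpa using (hasDerivAt_id s).const_mul (g (x t0))
      have h3 : HasDerivAt (fun s => B / 2 * (s - t0) ^ 2) (B * (s - t0)) s := by
        have := (((hasDerivAt_id s).sub_const t0).pow 2).const_mul (B / 2)
        exact this.congr_deriv (by simp only [id]; ring)
      exact ((h1.sub h2).sub h3).hasDerivWithinAt
    · intro s hs
      rw [interior_Icc] at hs
      have hgs : g (x s) ≤ g (x t0) + B * (s - t0) := by
        apply leg_est g hg F x t0 s hs.1.le (hx.mono (Icc_subset_Icc le_rfl hs.2.le))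
          (fun r hr => hd r ⟨hr.1, hr.2.trans hs.2⟩) B
          (fun r hr => hB r ⟨hr.1, hr.2.trans hs.2⟩)
      linarith
  have h2 := key ⟨le_rfl, h01⟩ ⟨h01, le_rfl⟩ h01
  simp only [sub_self] at h2
  nlinarith [h2]



section Aux
variable {n m : ℕ} (σ : Fin m → Euc n → Euc n) (u : Euc n → ℝ)

theorem fderiv_eq_inner_gradient (y : Euc n) (w : Euc n) :
    fderiv ℝ u y w = ⟪gradient u y, w⟫ := by
  rw [gradient, InnerProductSpace.toDual_symm_apply]

theorem gradient_contDiff (hu : ContDiff ℝ 3 u) : ContDiff ℝ 2 (gradient u) := by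
  have h1 : ContDiff ℝ 2 (fderiv ℝ u) := hu.fderiv_right (by norm_num)
  exact ((InnerProductSpace.toDual ℝ (Euc n)).symm.contDiff).comp h1

theorem gfun_contDiff (hσ : ∀ j, ContDiff ℝ 2 (σ j)) (hu : ContDiff ℝ 3 u) (i : Fin m) :
    ContDiff ℝ 1 fun y => ⟪gradient u y, σ i y⟫ :=
  ContDiff.inner ℝ ((gradient_contDiff u hu).of_le one_le_two) ((hσ i).of_le one_le_two)

/-- ψ i j y, continuous. -/
theorem psi_continuous (hσ : ∀ j, ContDiff ℝ 2 (σ j)) (hu : ContDiff ℝ 3 u) (i j : Fin m) :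
    Continuous fun y => fderiv ℝ (fun z => ⟪gradient u z, σ i z⟫) y (σ j y) := by
  apply Continuous.clm_apply
  · exact (gfun_contDiff σ u hσ hu i).continuous_fderiv one_ne_zero
  · exact (hσ j).continuous

theorem fderiv_u_field (hu : ContDiff ℝ 3 u) (c : Fin m → ℝ) (y : Euc n) :
    fderiv ℝ u y (∑ j, c j • σ j y) = ∑ i, c i * ⟪gradient u y, σ i y⟫ := by
  rw [fderiv_eq_inner_gradient]
  rw [inner_sum]
  exact Finset.sum_congr rfl fun i _ => real_inner_smul_right _ _ _

/-- The directional function `gC c y = ⟪∇u y, ∑ c j σ j y⟫` as a sum. -/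
theorem gC_eq (c : Fin m → ℝ) (y : Euc n) :
    ⟪gradient u y, ∑ j, c j • σ j y⟫ = ∑ i, c i * ⟪gradient u y, σ i y⟫ := by
  rw [inner_sum]
  exact Finset.sum_congr rfl fun i _ => real_inner_smul_right _ _ _

theorem gC_contDiff (hσ : ∀ j, ContDiff ℝ 2 (σ j)) (hu : ContDiff ℝ 3 u) (c : Fin m → ℝ) :
    ContDiff ℝ 1 fun y => ⟪gradient u y, ∑ j, c j • σ j y⟫ := by
  have : ContDiff ℝ 1 fun y => ∑ j : Fin m, c j • σ j y :=
    ContDiff.sum fun j _ => ContDiff.const_smul _ ((hσ j).of_le one_le_two)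
  exact ContDiff.inner ℝ ((gradient_contDiff u hu).of_le one_le_two) this

theorem field_contDiff (hσ : ∀ j, ContDiff ℝ 2 (σ j)) (c : Fin m → ℝ) :
    ContDiff ℝ 1 fun y => ∑ j : Fin m, c j • σ j y :=
  ContDiff.sum fun j _ => ContDiff.const_smul _ ((hσ j).of_le one_le_two)

/-- Second derivative along fields as a double sum of `ψ`'s. -/
theorem fderiv_gC_field (hσ : ∀ j, ContDiff ℝ 2 (σ j)) (hu : ContDiff ℝ 3 u)
    (c d : Fin m → ℝ) (y : Euc n) :
    fderiv ℝ (fun z => ⟪gradient u z, ∑ j, c j • σ j z⟫) y (∑ j, d j • σ j y) =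
      ∑ i, ∑ j, c i * d j * fderiv ℝ (fun z => ⟪gradient u z, σ i z⟫) y (σ j y) := by
  have hfun : (fun z => ⟪gradient u z, ∑ j, c j • σ j z⟫) =
      fun z => ∑ i, c i * ⟪gradient u z, σ i z⟫ := funext fun z => gC_eq σ u c z
  rw [hfun]
  have hdiff : ∀ i : Fin m, DifferentiableAt ℝ (fun z => ⟪gradient u z, σ i z⟫) y := fun i =>
    ((gfun_contDiff σ u hσ hu i).differentiable one_ne_zero) y
  have h1 : fderiv ℝ (fun z => ∑ i, c i * ⟪gradient u z, σ i z⟫) y =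
      ∑ i : Fin m, c i • fderiv ℝ (fun z => ⟪gradient u z, σ i z⟫) y := by
    rw [fderiv_fun_sum fun i _ => (hdiff i).const_mul (c i)]
    exact Finset.sum_congr rfl fun i _ => fderiv_const_mul (hdiff i) (c i)
  rw [h1]
  rw [ContinuousLinearMap.sum_apply]
  refine Finset.sum_congr rfl fun i _ => ?_
  rw [ContinuousLinearMap.smul_apply, map_sum]
  rw [Finset.smul_sum]
  refine Finset.sum_congr rfl fun j _ => ?_
  rw [ContinuousLinearMap.map_smul]
  simp only [smul_eq_mul]
  ring
end Aux

theorem quad_eig {n m : ℕ} (σ : Fin m → Euc n → Euc n) (u : Euc n → ℝ) (xbar : Euc n)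
    (lam : ℝ) (v : Fin m ⊕ Fin m → ℝ)
    (heig : Kmat σ u xbar *ᵥ v = lam • v) :
    (∑ i, ∑ j, v (Sum.inl i) * v (Sum.inl j) * Smat σ u xbar i j) +
      2 * (∑ i, ∑ j, v (Sum.inr i) * v (Sum.inl j) * Smat σ u xbar i j) +
      (∑ i, ∑ j, v (Sum.inr i) * v (Sum.inr j) * Smat σ u xbar i j) =
      lam * ((∑ i, v (Sum.inl i) ^ 2) + ∑ i, v (Sum.inr i) ^ 2) := by
  set S := Smat σ u xbar with hS
  set a : Fin m → ℝ := fun i => v (Sum.inl i)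
  set b : Fin m → ℝ := fun i => v (Sum.inr i)
  have symhalf : ∀ c : Fin m → ℝ, (∑ i, ∑ j, c i * (2⁻¹ * (S i j + S j i) * c j))
      = ∑ i, ∑ j, c i * c j * S i j := by
    intro c
    have h1 : ∀ i j : Fin m, c i * (2⁻¹ * (S i j + S j i) * c j)
        = 2⁻¹ * (c i * c j * S i j) + 2⁻¹ * (c i * c j * S j i) := fun i j => by ring
    simp_rw [h1, Finset.sum_add_distrib, ← Finset.mul_sum]
    have h2 : ∑ i, ∑ j, c i * c j * S j i = ∑ i, ∑ j, c i * c j * S i j := by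
      rw [Finset.sum_comm]
      exact Finset.sum_congr rfl fun i _ => Finset.sum_congr rfl fun j _ => by ring
    rw [h2]; ring
  have hswap : ∑ i, ∑ j, a i * (S j i * b j) = ∑ i, ∑ j, b i * a j * S i j := by
    rw [Finset.sum_comm]
    exact Finset.sum_congr rfl fun i _ => Finset.sum_congr rfl fun j _ => by ring
  have h1 : ∀ p, (Kmat σ u xbar *ᵥ v) p = lam * v p := by
    rw [heig]; intro p; simp
  have h2 : ∑ p : Fin m ⊕ Fin m, v p * (Kmat σ u xbar *ᵥ v) p = lam * ∑ p, v p ^ 2 := by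
    simp_rw [h1, Finset.mul_sum]
    exact Finset.sum_congr rfl fun p _ => by ring
  have e1 : ∀ i : Fin m, (Kmat σ u xbar *ᵥ v) (Sum.inl i)
      = (∑ j, 2⁻¹ * (S i j + S j i) * a j) + ∑ j, S j i * b j := by
    intro i
    simp [Kmat, Kof, Matrix.mulVec, dotProduct, Fintype.sum_sum_type, a, b, hS,
      Matrix.fromBlocks, Matrix.transpose_apply]
    exact Finset.sum_congr rfl fun j _ => by ring
  have e2 : ∀ i : Fin m, (Kmat σ u xbar *ᵥ v) (Sum.inr i)
      = (∑ j, S i j * a j) + ∑ j, 2⁻¹ * (S i j + S j i) * b j := by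
    intro i
    simp [Kmat, Kof, Matrix.mulVec, dotProduct, Fintype.sum_sum_type, a, b, hS,
      Matrix.fromBlocks, Matrix.transpose_apply]
    exact Finset.sum_congr rfl fun j _ => by ring
  have h3 : ∑ p : Fin m ⊕ Fin m, v p * (Kmat σ u xbar *ᵥ v) p
      = (∑ i, ∑ j, a i * (2⁻¹ * (S i j + S j i) * a j)) + (∑ i, ∑ j, a i * (S j i * b j))
        + ((∑ i, ∑ j, b i * (S i j * a j)) + ∑ i, ∑ j, b i * (2⁻¹ * (S i j + S j i) * b j)) := by
    rw [Fintype.sum_sum_type]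
    congr 1
    · simp_rw [e1, mul_add, Finset.sum_add_distrib, Finset.mul_sum]
      rfl
    · simp_rw [e2, mul_add, Finset.sum_add_distrib, Finset.mul_sum]
      rfl
  have h4 : ∑ p : Fin m ⊕ Fin m, v p ^ 2 = (∑ i, a i ^ 2) + ∑ i, b i ^ 2 := by
    rw [Fintype.sum_sum_type]
  have h5 : ∑ i, ∑ j, b i * (S i j * a j) = ∑ i, ∑ j, b i * a j * S i j :=
    Finset.sum_congr rfl fun i _ => Finset.sum_congr rfl fun j _ => by ring
  rw [h3, h4] at h2
  rw [symhalf a, symhalf b, hswap, h5] at h2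
  linarith [h2]




theorem bound_on_ball {n : ℕ} (f : Euc n → ℝ) (hf : Continuous f) (xbar : Euc n) :
    ∃ C : ℝ, 1 ≤ C ∧ ∀ y ∈ closedBall xbar 2, f y ≤ C := by
  obtain ⟨y0, _, hmax⟩ := (isCompact_closedBall xbar 2).exists_isMaxOn
    ⟨xbar, mem_closedBall_self (by norm_num)⟩ hf.continuousOn
  exact ⟨max (f y0) 1, le_max_right _ _, fun y hy => le_trans (hmax hy) (le_max_left _ _)⟩

theorem lipschitz_bound {n : ℕ} {f : Euc n → ℝ} (hf : ContDiff ℝ 1 f) (xbar : Euc n) :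
    ∃ L : ℝ, 1 ≤ L ∧ ∀ y ∈ closedBall xbar 2, |f y - f xbar| ≤ L * ‖y - xbar‖ := by
  obtain ⟨L, hL1, hL⟩ := bound_on_ball (fun y => ‖fderiv ℝ f y‖)
    (hf.continuous_fderiv one_ne_zero).norm xbar
  refine ⟨L, hL1, fun y hy => ?_⟩
  have := (convex_closedBall xbar 2).norm_image_sub_le_of_norm_fderiv_le
    (f := f) (C := L) (fun z _ => (hf.differentiable one_ne_zero).differentiableAt)
    (fun z hz => hL z hz) hy (mem_closedBall_self (by norm_num))
  simpa [Real.norm_eq_abs, abs_sub_comm, norm_sub_rev] using this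
theorem quad_bound {n m : ℕ} (σ : Fin m → Euc n → Euc n) (hσ : ∀ j, ContDiff ℝ 2 (σ j))
    (u : Euc n → ℝ) (hu : ContDiff ℝ 3 u) (xbar : Euc n)
    (c d : Fin m → ℝ) (hc : ∀ i, |c i| ≤ 1) (hd : ∀ i, |d i| ≤ 1) (y : Euc n) :
    fderiv ℝ (fun z => ⟪gradient u z, ∑ j, c j • σ j z⟫) y (∑ j, d j • σ j y) ≤
      (∑ i, ∑ j, c i * d j * Smat σ u xbar i j) +
      ∑ i, ∑ j, |fderiv ℝ (fun z => ⟪gradient u z, σ i z⟫) y (σ j y) - Smat σ u xbar i j| := by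
  rw [fderiv_gC_field σ u hσ hu c d y, ← Finset.sum_add_distrib]
  apply Finset.sum_le_sum; intro i _
  rw [← Finset.sum_add_distrib]
  apply Finset.sum_le_sum; intro j _
  set ψ := fderiv ℝ (fun z => ⟪gradient u z, σ i z⟫) y (σ j y) with hψ
  set Sv := Smat σ u xbar i j with hSv
  have h1 : |c i * d j| ≤ 1 := by
    rw [abs_mul]
    have h0 := abs_nonneg (c i)
    have h0' := abs_nonneg (d j)
    have := mul_le_mul (hc i) (hd j) h0' zero_le_one
    linarith
  have h2 : c i * d j * (ψ - Sv) ≤ |ψ - Sv| := by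
    calc c i * d j * (ψ - Sv) ≤ |c i * d j * (ψ - Sv)| := le_abs_self _
    _ = |c i * d j| * |ψ - Sv| := abs_mul _ _
    _ ≤ 1 * |ψ - Sv| := mul_le_mul_of_nonneg_right h1 (abs_nonneg _)
    _ = _ := one_mul _
  have h3 : c i * d j * ψ = c i * d j * Sv + c i * d j * (ψ - Sv) := by ring
  linarith

set_option maxHeartbeats 1000000 in
theorem core {n m : ℕ} (σ : Fin m → Euc n → Euc n) (hσ : ∀ j, ContDiff ℝ 2 (σ j))
    (u : Euc n → ℝ) (hu : ContDiff ℝ 3 u) (xbar : Euc n)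
    (htan : ∀ j, ⟪gradient u xbar, σ j xbar⟫ = 0)
    (lam : ℝ) (hlam : lam < 0) (v : Fin m ⊕ Fin m → ℝ) (hv : v ≠ 0)
    (heig : Kmat σ u xbar *ᵥ v = lam • v)
    (ha : ∑ i, v (Sum.inl i) ^ 2 ≤ 1) (hb : ∑ i, v (Sum.inr i) ^ 2 ≤ 1) :
    ∃ K > (0:ℝ), ∃ δ > (0:ℝ), δ ≤ 1 ∧ ∀ x₀ ∈ closedBall xbar δ, ∀ t : ℝ, 0 < t →
      K * Real.sqrt ‖x₀ - xbar‖ ≤ t → t ≤ K * Real.sqrt δ →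
      ∃ x : ℝ → Euc n,
        x 0 = x₀ ∧ Continuous x ∧
        (∀ s ∈ Ioo (0:ℝ) t,
          HasDerivAt x ((fun y => ∑ j, v (Sum.inl j) • σ j y) (x s)) s) ∧
        (∀ s ∈ Ioo t (2*t),
          HasDerivAt x ((fun y => ∑ j, v (Sum.inr j) • σ j y) (x s)) s) ∧
        (∀ s, s ≤ 0 → x s = x₀) ∧ (∀ s, 2*t ≤ s → x s = x (2*t)) ∧
        u (x (2*t)) ≤ u xbar := by
  classical
  set a : Fin m → ℝ := fun i => v (Sum.inl i) with hadef
  set b : Fin m → ℝ := fun i => v (Sum.inr i) with hbdef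
  have hai : ∀ i, |a i| ≤ 1 := fun i => (sq_le_one_iff_abs_le_one (a i)).mp
    (le_trans (Finset.single_le_sum (fun j _ => sq_nonneg (a j)) (Finset.mem_univ i)) ha)
  have hbi : ∀ i, |b i| ≤ 1 := fun i => (sq_le_one_iff_abs_le_one (b i)).mp
    (le_trans (Finset.single_le_sum (fun j _ => sq_nonneg (b j)) (Finset.mem_univ i)) hb)
  -- bound on fields
  obtain ⟨CF, hCF1, hCF⟩ := bound_on_ball (fun y => ∑ j, ‖σ j y‖)
    (continuous_finset_sum _ fun j _ => (hσ j).continuous.norm) xbar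
  have hCF0 : (0:ℝ) ≤ CF := le_trans zero_le_one hCF1
  have hFbd : ∀ (c : Fin m → ℝ), (∀ i, |c i| ≤ 1) → ∀ y ∈ closedBall xbar 2,
      ‖∑ j, c j • σ j y‖ ≤ CF := by
    intro c hc y hy
    calc ‖∑ j, c j • σ j y‖ ≤ ∑ j, ‖c j • σ j y‖ := norm_sum_le _ _
    _ ≤ ∑ j, ‖σ j y‖ := Finset.sum_le_sum fun j _ => by
        rw [norm_smul, Real.norm_eq_abs]
        exact mul_le_of_le_one_left (norm_nonneg _) (hc j)
    _ ≤ CF := hCF y hy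
  -- Lipschitz constant for fields
  obtain ⟨LD, hLD1, hLDb⟩ := bound_on_ball (fun y => ∑ j, ‖fderiv ℝ (σ j) y‖)
    (continuous_finset_sum _ fun j _ => ((hσ j).continuous_fderiv two_ne_zero).norm) xbar
  have hFlip : ∀ (c : Fin m → ℝ), (∀ i, |c i| ≤ 1) →
      LipschitzOnWith (Real.toNNReal LD) (fun y => ∑ j, c j • σ j y) (closedBall xbar 2) := by
    intro c hc
    apply (convex_closedBall xbar 2).lipschitzOnWith_of_nnnorm_fderiv_le
      (fun y _ => ((field_contDiff σ hσ c).differentiable one_ne_zero).differentiableAt)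
    intro y hy
    rw [← norm_toNNReal]
    apply Real.toNNReal_mono
    have hder : fderiv ℝ (fun y => ∑ j, c j • σ j y) y = ∑ j, c j • fderiv ℝ (σ j) y := by
      rw [fderiv_fun_sum (A := fun j y => c j • σ j y) (fun j _ =>
        (((hσ j).differentiable two_ne_zero) y).const_smul (c j))]
      exact Finset.sum_congr rfl fun j _ =>
        fderiv_const_smul (((hσ j).differentiable two_ne_zero) y) (c j)
    rw [hder]
    calc ‖∑ j, c j • fderiv ℝ (σ j) y‖ ≤ ∑ j, ‖c j • fderiv ℝ (σ j) y‖ := norm_sum_le _ _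
    _ ≤ ∑ j, ‖fderiv ℝ (σ j) y‖ := Finset.sum_le_sum fun j _ => by
        rw [norm_smul, Real.norm_eq_abs]
        exact mul_le_of_le_one_left (norm_nonneg _) (hc j)
    _ ≤ LD := hLDb y hy
  -- first order function
  have hG12smooth : ContDiff ℝ 1 fun y =>
      (⟪gradient u y, ∑ j, a j • σ j y⟫ + ⟪gradient u y, ∑ j, b j • σ j y⟫ : ℝ) :=
    (gC_contDiff σ u hσ hu a).add (gC_contDiff σ u hσ hu b)
  have hG12zero : (⟪gradient u xbar, ∑ j, a j • σ j xbar⟫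
      + ⟪gradient u xbar, ∑ j, b j • σ j xbar⟫ : ℝ) = 0 := by
    rw [gC_eq σ u a xbar, gC_eq σ u b xbar]
    simp [htan]
  obtain ⟨LG, hLG1, hLGb⟩ := lipschitz_bound hG12smooth xbar
  have hLG0 : (0:ℝ) ≤ LG := le_trans zero_le_one hLG1
  have hGb : ∀ y ∈ closedBall xbar 2,
      (⟪gradient u y, ∑ j, a j • σ j y⟫ + ⟪gradient u y, ∑ j, b j • σ j y⟫ : ℝ)
        ≤ LG * ‖y - xbar‖ := by
    intro y hy
    have := hLGb y hy
    rw [hG12zero, sub_zero] at this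
    exact le_trans (le_abs_self _) this
  -- u Lipschitz
  obtain ⟨M, hM1, hMb⟩ := lipschitz_bound (f := u) (hu.of_le (by norm_num)) xbar
  have hM0 : (0:ℝ) ≤ M := le_trans zero_le_one hM1
  -- the quadratic form value
  set ν : ℝ := (∑ i, a i ^ 2) + ∑ i, b i ^ 2 with hνdef
  have hν : 0 < ν := by
    obtain ⟨p, hp⟩ := Function.ne_iff.mp hv
    have hbn : (0:ℝ) ≤ ∑ i, b i ^ 2 := Finset.sum_nonneg fun i _ => sq_nonneg _
    have han : (0:ℝ) ≤ ∑ i, a i ^ 2 := Finset.sum_nonneg fun i _ => sq_nonneg _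
    rcases p with i | i
    · have h1 : 0 < a i ^ 2 := lt_of_le_of_ne (sq_nonneg _) (Ne.symm (pow_ne_zero 2 hp))
      have h2 : a i ^ 2 ≤ ∑ i, a i ^ 2 :=
        Finset.single_le_sum (fun j _ => sq_nonneg (a j)) (Finset.mem_univ i)
      simp only [hνdef]; linarith
    · have h1 : 0 < b i ^ 2 := lt_of_le_of_ne (sq_nonneg _) (Ne.symm (pow_ne_zero 2 hp))
      have h2 : b i ^ 2 ≤ ∑ i, b i ^ 2 :=
        Finset.single_le_sum (fun j _ => sq_nonneg (b j)) (Finset.mem_univ i)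
      simp only [hνdef]; linarith
  set Qaa : ℝ := ∑ i, ∑ j, a i * a j * Smat σ u xbar i j with hQaa
  set Qba : ℝ := ∑ i, ∑ j, b i * a j * Smat σ u xbar i j with hQba
  set Qbb : ℝ := ∑ i, ∑ j, b i * b j * Smat σ u xbar i j with hQbb
  have hquad : Qaa + 2 * Qba + Qbb = lam * ν := quad_eig σ u xbar lam v heig
  set ε : ℝ := -(lam * ν) / 8 with hεdef
  have hlamν : lam * ν < 0 := mul_neg_of_neg_of_pos hlam hν
  have hε : 0 < ε := by
    rw [hεdef]
    exact div_pos (neg_pos.mpr hlamν) (by norm_num)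
  set c' : ℝ := -(lam * ν) / 4 with hc'def
  have hc' : 0 < c' := by
    rw [hc'def]
    exact div_pos (neg_pos.mpr hlamν) (by norm_num)
  -- modulus of continuity for the second-order terms
  set Ψ : Euc n → ℝ := fun y => ∑ i, ∑ j,
    |fderiv ℝ (fun z => ⟪gradient u z, σ i z⟫) y (σ j y) - Smat σ u xbar i j| with hΨdef
  have hΨcont : Continuous Ψ := continuous_finset_sum _ fun i _ =>
    continuous_finset_sum _ fun j _ => ((psi_continuous σ u hσ hu i j).sub continuous_const).abs
  have hΨ0 : Ψ xbar = 0 := by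
    simp only [hΨdef, Smat, Matrix.of_apply, sub_self, abs_zero]
    simp
  obtain ⟨ρ₀, hρ₀, hρ₀b⟩ := Metric.continuousAt_iff.mp hΨcont.continuousAt ε hε
  set ρ : ℝ := min (ρ₀ / 2) 1 with hρdef
  have hρpos : 0 < ρ := lt_min (by linarith) zero_lt_one
  have hρ1 : ρ ≤ 1 := min_le_right _ _
  have hΨball : ∀ y ∈ closedBall xbar ρ, Ψ y ≤ ε := by
    intro y hy
    have h1 : dist y xbar < ρ₀ := lt_of_le_of_lt (mem_closedBall.mp hy)
      (lt_of_le_of_lt (min_le_left _ _) (by linarith))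
    have := hρ₀b h1
    rw [hΨ0, Real.dist_eq, sub_zero] at this
    exact le_of_lt (lt_of_abs_lt this)
  -- the constants K and δ
  set K : ℝ := Real.sqrt ((M + 1) / c') with hKdef
  have hKfrac : 0 < (M + 1) / c' := div_pos (by linarith) hc'
  have hKpos : 0 < K := Real.sqrt_pos.mpr hKfrac
  have hK2 : c' * K ^ 2 = M + 1 := by
    rw [hKdef, Real.sq_sqrt hKfrac.le]
    field_simp
  set δ : ℝ := min (min 1 ((ρ / (1 + 2 * CF * K)) ^ 2)) ((1 / (1 + LG * K)) ^ 2) with hδdef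
  have hden1 : 0 < 1 + 2 * CF * K := by
    have := mul_nonneg hCF0 hKpos.le
    linarith
  have hden2 : 0 < 1 + LG * K := by
    have := mul_nonneg hLG0 hKpos.le
    linarith
  have hδpos : 0 < δ :=
    lt_min (lt_min zero_lt_one (pow_pos (div_pos hρpos hden1) 2))
      (pow_pos (div_pos zero_lt_one hden2) 2)
  have hδ1 : δ ≤ 1 := le_trans (min_le_left _ _) (min_le_left _ _)
  refine ⟨K, hKpos, δ, hδpos, hδ1, ?_⟩
  intro x₀ hx₀ t ht htlow hthigh
  set r : ℝ := ‖x₀ - xbar‖ with hrdef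
  have hr0 : 0 ≤ r := norm_nonneg _
  have hrδ : r ≤ δ := by
    rw [hrdef, ← dist_eq_norm]
    exact mem_closedBall.mp hx₀
  -- square root facts
  have hsqδ : Real.sqrt δ ≤ ρ / (1 + 2 * CF * K) := by
    have h1 : δ ≤ (ρ / (1 + 2 * CF * K)) ^ 2 :=
      le_trans (min_le_left _ _) (min_le_right _ _)
    calc Real.sqrt δ ≤ Real.sqrt ((ρ / (1 + 2 * CF * K)) ^ 2) := Real.sqrt_le_sqrt h1
    _ = ρ / (1 + 2 * CF * K) := Real.sqrt_sq (div_nonneg hρpos.le hden1.le)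
  have hsqδ2 : Real.sqrt δ ≤ 1 / (1 + LG * K) := by
    have h1 : δ ≤ (1 / (1 + LG * K)) ^ 2 := min_le_right _ _
    calc Real.sqrt δ ≤ Real.sqrt ((1 / (1 + LG * K)) ^ 2) := Real.sqrt_le_sqrt h1
    _ = 1 / (1 + LG * K) := Real.sqrt_sq (div_nonneg zero_le_one hden2.le)
  have hδsq : δ ≤ Real.sqrt δ := by
    have h1 : Real.sqrt δ * Real.sqrt δ = δ := Real.mul_self_sqrt hδpos.le
    have h2 : Real.sqrt δ ≤ 1 := by
      rw [← Real.sqrt_one]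
      exact Real.sqrt_le_sqrt hδ1
    have h3 : Real.sqrt δ * Real.sqrt δ ≤ Real.sqrt δ * 1 :=
      mul_le_mul_of_nonneg_left h2 (Real.sqrt_nonneg δ)
    rw [mul_one] at h3
    linarith
  -- containment estimate
  have hcont1 : δ + 2 * CF * t ≤ ρ := by
    have h1 : 2 * CF * t ≤ 2 * CF * (K * Real.sqrt δ) := by
      apply mul_le_mul_of_nonneg_left hthigh (by linarith)
    have h2 : (1 + 2 * CF * K) * Real.sqrt δ ≤ ρ := by
      rw [← le_div_iff₀' hden1]
      exact hsqδ
    have h3 : 2 * CF * (K * Real.sqrt δ) + Real.sqrt δ = (1 + 2 * CF * K) * Real.sqrt δ := by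
      ring
    linarith
  have hρ2 : ρ ≤ 2 := le_trans hρ1 one_le_two
  -- first ODE leg
  have htK : t ≤ K * Real.sqrt δ := hthigh
  have hsub1 : closedBall x₀ (CF * t) ⊆ closedBall xbar 2 := by
    intro y hy
    rw [mem_closedBall] at *
    have h1 : dist y xbar ≤ dist y x₀ + dist x₀ xbar := dist_triangle _ _ _
    have h2 : dist x₀ xbar ≤ δ := mem_closedBall.mp hx₀
    have h3 : CF * t ≤ δ + 2 * CF * t := by
      have := mul_nonneg hCF0 ht.le
      linarith
    linarith [hcont1, hρ2]
  obtain ⟨x1, hx10, hx1c, hx1mem, hx1lo, hx1hi, hx1d⟩ :=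
    ode_solve (fun y => ∑ j, a j • σ j y) x₀ t ht.le (Real.toNNReal LD) CF hCF0
      ((hFlip a hai).mono hsub1) (fun y hy => hFbd a hai y (hsub1 hy))
  -- second ODE leg
  have hx1T : dist (x1 t) xbar ≤ δ + CF * t := by
    have h1 := hx1mem t
    rw [mem_closedBall] at h1
    have h2 : dist (x1 t) xbar ≤ dist (x1 t) x₀ + dist x₀ xbar := dist_triangle _ _ _
    have h3 : dist x₀ xbar ≤ δ := mem_closedBall.mp hx₀
    linarith
  have hsub2 : closedBall (x1 t) (CF * t) ⊆ closedBall xbar 2 := by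
    intro y hy
    rw [mem_closedBall] at *
    have h1 : dist y xbar ≤ dist y (x1 t) + dist (x1 t) xbar := dist_triangle _ _ _
    have ht0 : 0 ≤ CF * t := mul_nonneg hCF0 ht.le
    linarith [hcont1, hρ2]
  obtain ⟨x2, hx20, hx2c, hx2mem, hx2lo, hx2hi, hx2d⟩ :=
    ode_solve (fun y => ∑ j, b j • σ j y) (x1 t) t ht.le (Real.toNNReal LD) CF hCF0
      ((hFlip b hbi).mono hsub2) (fun y hy => hFbd b hbi y (hsub2 hy))
  -- the glued trajectory
  set x : ℝ → Euc n := fun s => x1 s + x2 (s - t) - x2 0 with hxdef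
  have hxlow : ∀ s, s ≤ t → x s = x1 s := by
    intro s hs
    simp only [hxdef]
    rw [hx2lo (s - t) (by linarith), hx20]
    abel
  have hxhigh : ∀ s, t ≤ s → x s = x2 (s - t) := by
    intro s hs
    simp only [hxdef]
    rw [hx1hi s hs, hx20]
    abel
  have hx0 : x 0 = x₀ := by rw [hxlow 0 ht.le, hx10]
  have hxcont : Continuous x := by
    apply Continuous.sub
    · exact hx1c.add (hx2c.comp (continuous_id.sub continuous_const))
    · exact continuous_const
  have hd1 : ∀ s ∈ Ioo (0:ℝ) t, HasDerivAt x ((fun y => ∑ j, a j • σ j y) (x s)) s := by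
    intro s hs
    have hda : HasDerivAt x1 ((fun y => ∑ j, a j • σ j y) (x1 s)) s :=
      (hx1d s ⟨hs.1.le, hs.2.le⟩).hasDerivAt (Icc_mem_nhds hs.1 hs.2)
    have heq : x =ᶠ[nhds s] x1 := by
      filter_upwards [Iio_mem_nhds hs.2] with r hr
      exact hxlow r (le_of_lt hr)
    have := hda.congr_of_eventuallyEq heq
    rwa [← hxlow s hs.2.le] at this
  have hd2 : ∀ s ∈ Ioo t (2*t), HasDerivAt x ((fun y => ∑ j, b j • σ j y) (x s)) s := by
    intro s hs
    have hmem : s - t ∈ Icc (0:ℝ) t := ⟨by linarith [hs.1], by linarith [hs.2]⟩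
    have hdb : HasDerivAt x2 ((fun y => ∑ j, b j • σ j y) (x2 (s - t))) (s - t) :=
      (hx2d (s - t) hmem).hasDerivAt (Icc_mem_nhds (by linarith [hs.1]) (by linarith [hs.2]))
    have hshift : HasDerivAt (fun r => x2 (r - t))
        ((fun y => ∑ j, b j • σ j y) (x2 (s - t))) s := by
      have h := hdb.scomp s ((hasDerivAt_id s).sub_const t)
      exact h.congr_deriv (one_smul _ _)
    have heq : x =ᶠ[nhds s] fun r => x2 (r - t) := by
      filter_upwards [Ioi_mem_nhds hs.1] with r hr
      exact hxhigh r (le_of_lt hr)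
    have := hshift.congr_of_eventuallyEq heq
    rwa [← hxhigh s hs.1.le] at this
  have hxlo' : ∀ s, s ≤ 0 → x s = x₀ := fun s hs => by
    rw [hxlow s (le_trans hs ht.le), hx1lo s hs]
  have hxhi' : ∀ s, 2*t ≤ s → x s = x (2*t) := by
    intro s hs
    have h1 : x s = x2 (s - t) := hxhigh s (by linarith)
    have h2 : x (2*t) = x2 (2*t - t) := hxhigh (2*t) (by linarith)
    rw [h1, h2]
    have h3 : (2*t - t) = t := by ring
    rw [h3, hx2hi (s - t) (by linarith)]
  -- membership of trajectory in the good ball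
  have hmem1 : ∀ s ∈ Icc (0:ℝ) t, x s ∈ closedBall xbar ρ := by
    intro s hs
    rw [hxlow s hs.2, mem_closedBall]
    have h1 := hx1mem s
    rw [mem_closedBall] at h1
    have h2 : dist (x1 s) xbar ≤ dist (x1 s) x₀ + dist x₀ xbar := dist_triangle _ _ _
    have h3 : dist x₀ xbar ≤ δ := mem_closedBall.mp hx₀
    have ht0 : 0 ≤ CF * t := mul_nonneg hCF0 ht.le
    linarith [hcont1]
  have hmem2 : ∀ s ∈ Icc t (2*t), x s ∈ closedBall xbar ρ := by
    intro s hs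
    rw [hxhigh s hs.1, mem_closedBall]
    have h1 := hx2mem (s - t)
    rw [mem_closedBall] at h1
    have h2 : dist (x2 (s-t)) xbar ≤ dist (x2 (s-t)) (x1 t) + dist (x1 t) xbar :=
      dist_triangle _ _ _
    linarith [hcont1, hx1T]
  have hρsub : closedBall xbar ρ ⊆ closedBall xbar 2 :=
    closedBall_subset_closedBall hρ2
  -- the three Taylor estimates
  have hBaa : ∀ s ∈ Ioo (0:ℝ) t,
      fderiv ℝ (fun z => ⟪gradient u z, ∑ j, a j • σ j z⟫) (x s)
        ((fun y => ∑ j, a j • σ j y) (x s)) ≤ Qaa + ε := by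
    intro s hs
    have h1 := quad_bound σ hσ u hu xbar a a hai hai (x s)
    have h2 : Ψ (x s) ≤ ε := hΨball _ (hmem1 s ⟨hs.1.le, hs.2.le⟩)
    simp only [hΨdef] at h2
    refine le_trans h1 ?_
    rw [hQaa]
    linarith
  have hBba : ∀ s ∈ Ioo (0:ℝ) t,
      fderiv ℝ (fun z => ⟪gradient u z, ∑ j, b j • σ j z⟫) (x s)
        ((fun y => ∑ j, a j • σ j y) (x s)) ≤ Qba + ε := by
    intro s hs
    have h1 := quad_bound σ hσ u hu xbar b a hbi hai (x s)
    have h2 : Ψ (x s) ≤ ε := hΨball _ (hmem1 s ⟨hs.1.le, hs.2.le⟩)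
    simp only [hΨdef] at h2
    refine le_trans h1 ?_
    rw [hQba]
    linarith
  have hBbb : ∀ s ∈ Ioo t (2*t),
      fderiv ℝ (fun z => ⟪gradient u z, ∑ j, b j • σ j z⟫) (x s)
        ((fun y => ∑ j, b j • σ j y) (x s)) ≤ Qbb + ε := by
    intro s hs
    have h1 := quad_bound σ hσ u hu xbar b b hbi hbi (x s)
    have h2 : Ψ (x s) ≤ ε := hΨball _ (hmem2 s ⟨hs.1.le, hs.2.le⟩)
    simp only [hΨdef] at h2
    refine le_trans h1 ?_
    rw [hQbb]
    linarith
  have hu1 : ContDiff ℝ 1 u := hu.of_le (by norm_num)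
  have leg1 : u (x t) ≤ u (x 0) + (⟪gradient u (x 0), ∑ j, a j • σ j (x 0)⟫ : ℝ) * (t - 0)
      + (Qaa + ε) / 2 * (t - 0) ^ 2 := by
    apply leg_est2 u (fun z => ⟪gradient u z, ∑ j, a j • σ j z⟫) hu1
      (gC_contDiff σ u hσ hu a) (fun y => ∑ j, a j • σ j y)
      (fun y => fderiv_eq_inner_gradient u y _) x 0 t ht.le
      hxcont.continuousOn hd1 (Qaa + ε) hBaa
  have cross : (⟪gradient u (x t), ∑ j, b j • σ j (x t)⟫ : ℝ) ≤
      (⟪gradient u (x 0), ∑ j, b j • σ j (x 0)⟫ : ℝ) + (Qba + ε) * (t - 0) := by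
    apply leg_est (fun z => ⟪gradient u z, ∑ j, b j • σ j z⟫)
      (gC_contDiff σ u hσ hu b) (fun y => ∑ j, a j • σ j y) x 0 t ht.le
      hxcont.continuousOn hd1 (Qba + ε) hBba
  have leg2 : u (x (2*t)) ≤ u (x t) + (⟪gradient u (x t), ∑ j, b j • σ j (x t)⟫ : ℝ) * (2*t - t)
      + (Qbb + ε) / 2 * (2*t - t) ^ 2 := by
    apply leg_est2 u (fun z => ⟪gradient u z, ∑ j, b j • σ j z⟫) hu1
      (gC_contDiff σ u hσ hu b) (fun y => ∑ j, b j • σ j y)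
      (fun y => fderiv_eq_inner_gradient u y _) x t (2*t) (by linarith)
      hxcont.continuousOn hd2 (Qbb + ε) hBbb
  -- first-order smallness
  have hx₀2 : x₀ ∈ closedBall xbar 2 := closedBall_subset_closedBall (by linarith) hx₀
  have hfirst : (⟪gradient u x₀, ∑ j, a j • σ j x₀⟫
      + ⟪gradient u x₀, ∑ j, b j • σ j x₀⟫ : ℝ) ≤ LG * r := hGb x₀ hx₀2
  have huM : u x₀ ≤ u xbar + M * r := by
    have := hMb x₀ hx₀2
    have h2 := le_abs_self (u x₀ - u xbar)
    rw [hrdef]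
    linarith
  -- final arithmetic
  have h2tt : (2*t - t) = t := by ring
  rw [h2tt] at leg2
  rw [sub_zero] at leg1 cross
  have htsq : K ^ 2 * r ≤ t ^ 2 := by
    have h1 : K * Real.sqrt r ≤ t := htlow
    have h2 : (K * Real.sqrt r) ^ 2 ≤ t ^ 2 := by
      apply sq_le_sq' _ h1
      have := mul_nonneg hKpos.le (Real.sqrt_nonneg r)
      linarith
    have h3 : (K * Real.sqrt r) ^ 2 = K ^ 2 * r := by
      rw [mul_pow, Real.sq_sqrt hr0]
    linarith
  have hLGrt : LG * r * t ≤ r := by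
    have h1 : t ≤ K * Real.sqrt δ := hthigh
    have h2 : LG * K * Real.sqrt δ ≤ 1 := by
      have h3 : (1 + LG * K) * Real.sqrt δ ≤ 1 := by
        rw [← le_div_iff₀' hden2]
        exact hsqδ2
      have h4 : (1 + LG * K) * Real.sqrt δ = Real.sqrt δ + LG * K * Real.sqrt δ := by ring
      have h5 := Real.sqrt_nonneg δ
      linarith
    have h4 : LG * r * t ≤ LG * r * (K * Real.sqrt δ) :=
      mul_le_mul_of_nonneg_left h1 (mul_nonneg hLG0 hr0)
    have h5 : LG * r * (K * Real.sqrt δ) = LG * K * Real.sqrt δ * r := by ring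
    have h6 : LG * K * Real.sqrt δ * r ≤ 1 * r := mul_le_mul_of_nonneg_right h2 hr0
    linarith
  have hquadco : (Qaa + ε) / 2 + (Qba + ε) + (Qbb + ε) / 2 = -c' := by
    rw [hεdef, hc'def]
    linear_combination hquad / 2
  have hMr : M * r + r ≤ c' * t ^ 2 := by
    have h1 : c' * (K ^ 2 * r) ≤ c' * t ^ 2 := mul_le_mul_of_nonneg_left htsq hc'.le
    have h2 : c' * K ^ 2 * r = (M + 1) * r := by rw [hK2]
    have h3 : c' * (K ^ 2 * r) = c' * K ^ 2 * r := by ring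
    have h4 : (M + 1) * r = M * r + r := by ring
    linarith
  have hfinal : u (x (2*t)) ≤ u xbar := by
    have e0 : x 0 = x₀ := hx0
    rw [e0] at leg1 cross
    have hmul : (⟪gradient u (x t), ∑ j, b j • σ j (x t)⟫ : ℝ) * t ≤
        ((⟪gradient u x₀, ∑ j, b j • σ j x₀⟫ : ℝ) + (Qba + ε) * t) * t :=
      mul_le_mul_of_nonneg_right cross ht.le
    have hmul' : ((⟪gradient u x₀, ∑ j, b j • σ j x₀⟫ : ℝ) + (Qba + ε) * t) * t =
        (⟪gradient u x₀, ∑ j, b j • σ j x₀⟫ : ℝ) * t + (Qba + ε) * t ^ 2 := by ring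
    have hfm : ((⟪gradient u x₀, ∑ j, a j • σ j x₀⟫
        + ⟪gradient u x₀, ∑ j, b j • σ j x₀⟫ : ℝ)) * t ≤ LG * r * t := by
      have := mul_le_mul_of_nonneg_right hfirst ht.le
      linarith
    have hfm' : ((⟪gradient u x₀, ∑ j, a j • σ j x₀⟫
        + ⟪gradient u x₀, ∑ j, b j • σ j x₀⟫ : ℝ)) * t =
        (⟪gradient u x₀, ∑ j, a j • σ j x₀⟫ : ℝ) * t
        + (⟪gradient u x₀, ∑ j, b j • σ j x₀⟫ : ℝ) * t := by ring
    have hQt : (Qaa + ε) / 2 * t ^ 2 + (Qba + ε) * t ^ 2 + (Qbb + ε) / 2 * t ^ 2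
        = -(c' * t ^ 2) := by
      have h9 : (Qaa + ε) / 2 * t ^ 2 + (Qba + ε) * t ^ 2 + (Qbb + ε) / 2 * t ^ 2
          = ((Qaa + ε) / 2 + (Qba + ε) + (Qbb + ε) / 2) * t ^ 2 := by ring
      rw [h9, hquadco]
      ring
    linarith [leg1, leg2, hmul, hmul', hfm, hfm', hQt, huM, hMr, hLGrt]
  exact ⟨x, hx0, hxcont, hd1, hd2, hxlo', hxhi', hfinal⟩
def switchCtrl {m : ℕ} (v : Fin m ⊕ Fin m → ℝ) (t : ℝ) : ℝ → Euc m :=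
  fun s => if s < t then WithLp.toLp 2 (fun j => v (Sum.inl j)) else
    if s < 2*t then WithLp.toLp 2 (fun j => v (Sum.inr j)) else 0

theorem half_norm_le {m : ℕ} (w : Euc m) (hw : ∑ i, w i ^ 2 ≤ 1) :
    w ∈ closedBall (0 : Euc m) 1 := by
  rw [mem_closedBall_zero_iff, EuclideanSpace.norm_eq]
  have h1 : ∑ i, ‖w i‖ ^ 2 ≤ 1 := by
    simpa [Real.norm_eq_abs, sq_abs] using hw
  calc Real.sqrt (∑ i, ‖w i‖ ^ 2) ≤ Real.sqrt 1 := Real.sqrt_le_sqrt h1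
  _ = 1 := Real.sqrt_one

theorem switchCtrl_mem {m : ℕ} (v : Fin m ⊕ Fin m → ℝ) (t : ℝ)
    (ha : ∑ i, v (Sum.inl i) ^ 2 ≤ 1) (hb : ∑ i, v (Sum.inr i) ^ 2 ≤ 1) (s : ℝ) :
    switchCtrl v t s ∈ closedBall (0 : Euc m) 1 := by
  unfold switchCtrl
  split_ifs
  · exact half_norm_le _ ha
  · exact half_norm_le _ hb
  · exact mem_closedBall_self zero_le_one

theorem switchCtrl_pw {m : ℕ} (v : Fin m ⊕ Fin m → ℝ) (t : ℝ) (ht : 0 < t) :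
    ∀ T > (0 : ℝ), ∃ D : Finset ℝ, ∀ s ∈ Icc (0 : ℝ) T, s ∉ D →
      ContinuousAt (switchCtrl v t) s := by
  classical
  intro T _
  refine ⟨{t, 2*t}, fun s _ hsD => ?_⟩
  simp only [Finset.mem_insert, Finset.mem_singleton, not_or] at hsD
  obtain ⟨hs1, hs2⟩ := hsD
  rcases lt_trichotomy s t with h | h | h
  · have heq : switchCtrl v t =ᶠ[nhds s] fun _ => (WithLp.toLp 2 (fun j => v (Sum.inl j)) : Euc m) := by
      filter_upwards [Iio_mem_nhds h] with r hr
      simp only [switchCtrl, if_pos (show r < t from hr)]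
    exact continuousAt_const.congr heq.symm
  · exact absurd h hs1
  · rcases lt_trichotomy s (2*t) with h2 | h2 | h2
    · have heq : switchCtrl v t =ᶠ[nhds s] fun _ => (WithLp.toLp 2 (fun j => v (Sum.inr j)) : Euc m) := by
        filter_upwards [Ioo_mem_nhds h h2] with r hr
        simp only [switchCtrl, if_neg (not_lt.mpr hr.1.le), if_pos hr.2]
      exact continuousAt_const.congr heq.symm
    · exact absurd h2 hs2
    · have heq : switchCtrl v t =ᶠ[nhds s] fun _ => (0 : Euc m) := by
        filter_upwards [Ioi_mem_nhds h2] with r hr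
        have hrt : ¬ r < t := by
          simp only [mem_Ioi] at hr
          push_neg
          linarith
        have hr2t : ¬ r < 2*t := by
          simp only [mem_Ioi] at hr
          push_neg
          linarith
        simp only [switchCtrl, if_neg hrt, if_neg hr2t]
      exact continuousAt_const.congr heq.symm

theorem symF_switch {n m : ℕ} (σ : Fin m → Euc n → Euc n) (v : Fin m ⊕ Fin m → ℝ)
    (t s : ℝ) (y : Euc n) :
    symF σ y (switchCtrl v t s) =
      if s < t then ∑ j, v (Sum.inl j) • σ j y
      else if s < 2*t then ∑ j, v (Sum.inr j) • σ j y else 0 := by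
  unfold symF switchCtrl
  split_ifs <;> simp

theorem switch_integrable {n m : ℕ} (σ : Fin m → Euc n → Euc n)
    (hσ : ∀ j, ContDiff ℝ 2 (σ j)) (v : Fin m ⊕ Fin m → ℝ) (t : ℝ)
    (x : ℝ → Euc n) (hxc : Continuous x) (α β : ℝ) :
    IntervalIntegrable (fun s => symF σ (x s) (switchCtrl v t s)) volume α β := by
  classical
  have hF1 : Continuous fun s => ∑ j, v (Sum.inl j) • σ j (x s) :=
    ((field_contDiff σ hσ fun j => v (Sum.inl j)).continuous).comp hxc
  have hF2 : Continuous fun s => ∑ j, v (Sum.inr j) • σ j (x s) :=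
    ((field_contDiff σ hσ fun j => v (Sum.inr j)).continuous).comp hxc
  have hGeq : (fun s => symF σ (x s) (switchCtrl v t s)) =
      fun s => if s < t then (∑ j, v (Sum.inl j) • σ j (x s)) else
        if s < 2*t then (∑ j, v (Sum.inr j) • σ j (x s)) else 0 :=
    funext fun s => symF_switch σ v t s (x s)
  rw [hGeq, intervalIntegrable_iff]
  have hmeas : StronglyMeasurable fun s =>
      if s < t then (∑ j, v (Sum.inl j) • σ j (x s)) else
        if s < 2*t then (∑ j, v (Sum.inr j) • σ j (x s)) else 0 := by
    apply StronglyMeasurable.ite (measurableSet_Iio (a := t))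
    · exact hF1.stronglyMeasurable
    · apply StronglyMeasurable.ite (measurableSet_Iio (a := 2*t))
      · exact hF2.stronglyMeasurable
      · exact stronglyMeasurable_const
  obtain ⟨s0, _, hmax⟩ := isCompact_uIcc.exists_isMaxOn (s := uIcc α β)
    ⟨α, left_mem_uIcc⟩
    ((hF1.norm.add hF2.norm).continuousOn)
  refine MeasureTheory.Integrable.mono'
    (g := fun _ => ‖∑ j, v (Sum.inl j) • σ j (x s0)‖ + ‖∑ j, v (Sum.inr j) • σ j (x s0)‖)
    (integrableOn_const measure_Ioc_lt_top.ne)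
    hmeas.aestronglyMeasurable ?_
  rw [ae_restrict_iff' measurableSet_uIoc]
  refine Filter.Eventually.of_forall fun s hs => ?_
  have hs' : s ∈ uIcc α β := uIoc_subset_uIcc hs
  have h1 := hmax hs'
  simp only [Set.mem_setOf_eq] at h1
  have h1' : ‖∑ j, v (Sum.inl j) • σ j (x s)‖ + ‖∑ j, v (Sum.inr j) • σ j (x s)‖ ≤
      ‖∑ j, v (Sum.inl j) • σ j (x s0)‖ + ‖∑ j, v (Sum.inr j) • σ j (x s0)‖ := h1
  show ‖(if s < t then ∑ j, v (Sum.inl j) • σ j (x s)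
      else if s < 2*t then ∑ j, v (Sum.inr j) • σ j (x s) else 0)‖ ≤
    ‖∑ j, v (Sum.inl j) • σ j (x s0)‖ + ‖∑ j, v (Sum.inr j) • σ j (x s0)‖
  have h2 : 0 ≤ ‖∑ j, v (Sum.inl j) • σ j (x s)‖ := norm_nonneg _
  have h3 : 0 ≤ ‖∑ j, v (Sum.inr j) • σ j (x s)‖ := norm_nonneg _
  split_ifs
  · linarith
  · linarith
  · simp only [norm_zero]
    linarith
theorem switch_integral {n m : ℕ} (σ : Fin m → Euc n → Euc n)
    (hσ : ∀ j, ContDiff ℝ 2 (σ j)) (v : Fin m ⊕ Fin m → ℝ) (t : ℝ) (ht : 0 < t)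
    (x : ℝ → Euc n) (hxc : Continuous x)
    (hd1 : ∀ s ∈ Ioo (0:ℝ) t, HasDerivAt x (∑ j, v (Sum.inl j) • σ j (x s)) s)
    (hd2 : ∀ s ∈ Ioo t (2*t), HasDerivAt x (∑ j, v (Sum.inr j) • σ j (x s)) s)
    (hhi : ∀ s, 2*t ≤ s → x s = x (2*t)) :
    ∀ θ : ℝ, 0 ≤ θ → x θ = x 0 + ∫ s in (0:ℝ)..θ, symF σ (x s) (switchCtrl v t s) := by
  have hF1 : Continuous fun s => ∑ j, v (Sum.inl j) • σ j (x s) :=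
    ((field_contDiff σ hσ fun j => v (Sum.inl j)).continuous).comp hxc
  have hF2 : Continuous fun s => ∑ j, v (Sum.inr j) • σ j (x s) :=
    ((field_contDiff σ hσ fun j => v (Sum.inr j)).continuous).comp hxc
  have hInt := switch_integrable σ hσ v t x hxc
  have piece1 : ∀ θ, 0 ≤ θ → θ ≤ t →
      (∫ s in (0:ℝ)..θ, symF σ (x s) (switchCtrl v t s)) = x θ - x 0 := by
    intro θ h0 hθ
    have hae : ∀ᵐ s ∂(volume : Measure ℝ), s ∈ Set.uIoc (0:ℝ) θ →
        symF σ (x s) (switchCtrl v t s) = ∑ j, v (Sum.inl j) • σ j (x s) := by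
      filter_upwards [(Set.countable_singleton t).ae_notMem (volume : Measure ℝ)]
        with s hst hsmem
      rw [Set.uIoc_of_le h0] at hsmem
      have hslt : s < t := lt_of_le_of_ne (le_trans hsmem.2 hθ)
        (by simpa [Set.mem_singleton_iff] using hst)
      rw [symF_switch, if_pos hslt]
    rw [intervalIntegral.integral_congr_ae hae]
    apply intervalIntegral.integral_eq_sub_of_hasDeriv_right_of_le h0 hxc.continuousOn
    · intro s hs
      exact (hd1 s ⟨hs.1, lt_of_lt_of_le hs.2 hθ⟩).hasDerivWithinAt
    · exact hF1.intervalIntegrable 0 θ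
  have piece2 : ∀ θ, t ≤ θ → θ ≤ 2*t →
      (∫ s in t..θ, symF σ (x s) (switchCtrl v t s)) = x θ - x t := by
    intro θ h0 hθ
    have hae : ∀ᵐ s ∂(volume : Measure ℝ), s ∈ Set.uIoc t θ →
        symF σ (x s) (switchCtrl v t s) = ∑ j, v (Sum.inr j) • σ j (x s) := by
      filter_upwards [(Set.countable_singleton (2*t)).ae_notMem (volume : Measure ℝ)]
        with s hst hsmem
      rw [Set.uIoc_of_le h0] at hsmem
      have hslt : s < 2*t := lt_of_le_of_ne (le_trans hsmem.2 hθ)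
        (by simpa [Set.mem_singleton_iff] using hst)
      rw [symF_switch, if_neg (not_lt.mpr hsmem.1.le), if_pos hslt]
    rw [intervalIntegral.integral_congr_ae hae]
    apply intervalIntegral.integral_eq_sub_of_hasDeriv_right_of_le h0 hxc.continuousOn
    · intro s hs
      exact (hd2 s ⟨hs.1, lt_of_lt_of_le hs.2 hθ⟩).hasDerivWithinAt
    · exact hF2.intervalIntegrable t θ
  have piece3 : ∀ θ, 2*t ≤ θ →
      (∫ s in (2*t)..θ, symF σ (x s) (switchCtrl v t s)) = 0 := by
    intro θ h0
    have hae : ∀ᵐ s ∂(volume : Measure ℝ), s ∈ Set.uIoc (2*t) θ →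
        symF σ (x s) (switchCtrl v t s) = 0 := by
      refine Filter.Eventually.of_forall fun s hsmem => ?_
      rw [Set.uIoc_of_le h0] at hsmem
      have h1 : ¬ s < t := by push_neg; linarith [hsmem.1]
      have h2 : ¬ s < 2*t := by push_neg; linarith [hsmem.1]
      rw [symF_switch, if_neg h1, if_neg h2]
    rw [intervalIntegral.integral_congr_ae hae, intervalIntegral.integral_zero]
  intro θ hθ
  rcases le_total θ t with h | h
  · rw [piece1 θ hθ h]; abel
  · have h0t := piece1 t ht.le le_rfl
    rcases le_total θ (2*t) with h2 | h2
    · have hsum := intervalIntegral.integral_add_adjacent_intervals (hInt 0 t) (hInt t θ)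
      rw [← hsum, h0t, piece2 θ h h2]; abel
    · have hsum1 := intervalIntegral.integral_add_adjacent_intervals (hInt 0 t) (hInt t (2*t))
      have hsum2 :=
        intervalIntegral.integral_add_adjacent_intervals (hInt 0 (2*t)) (hInt (2*t) θ)
      rw [← hsum2, ← hsum1, h0t, piece2 (2*t) (by linarith) le_rfl, piece3 θ h2, hhi θ h2]
      abel

theorem switch_isTraj {n m : ℕ} (σ : Fin m → Euc n → Euc n)
    (hσ : ∀ j, ContDiff ℝ 2 (σ j)) (v : Fin m ⊕ Fin m → ℝ)
    (ha : ∑ i, v (Sum.inl i) ^ 2 ≤ 1) (hb : ∑ i, v (Sum.inr i) ^ 2 ≤ 1)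
    (t : ℝ) (ht : 0 < t) (x : ℝ → Euc n) (hxc : Continuous x)
    (hd1 : ∀ s ∈ Ioo (0:ℝ) t, HasDerivAt x (∑ j, v (Sum.inl j) • σ j (x s)) s)
    (hd2 : ∀ s ∈ Ioo t (2*t), HasDerivAt x (∑ j, v (Sum.inr j) • σ j (x s)) s)
    (hhi : ∀ s, 2*t ≤ s → x s = x (2*t)) :
    IsTraj (symF σ) (closedBall (0 : Euc m) 1) (switchCtrl v t) x :=
  ⟨⟨fun s => switchCtrl_mem v t ha hb s, switchCtrl_pw v t ht⟩, hxc.continuousOn,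
    fun θ hθ => switch_integral σ hσ v t ht x hxc hd1 hd2 hhi θ hθ⟩

theorem const_isTraj {n m : ℕ} (σ : Fin m → Euc n → Euc n) (x₀ : Euc n) :
    IsTraj (symF σ) (closedBall (0 : Euc m) 1) (fun _ => 0) (fun _ => x₀) := by
  refine ⟨⟨fun s => mem_closedBall_self zero_le_one,
    fun T hT => ⟨∅, fun s _ _ => continuousAt_const⟩⟩, continuousOn_const, fun θ hθ => ?_⟩
  simp [symF]

end AuxProofs

/-- Theorem 4.5: for a symmetric system, if all vector fields are tangent at
`xbar` and `K(xbar)` has a negative eigenvalue, then the target `{u ≤ u(xbar)}` is STLA at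
`xbar`, `T(x) ≤ C|x - xbar|^{1/2}` near `xbar`, and the coordinates of an eigenvector with
minimal eigenvalue give two controls whose single-switch trajectories reach the target in
finite time. -/
theorem statement13 {n m : ℕ} (σ : Fin m → Euc n → Euc n) (hσ : ∀ j, ContDiff ℝ 2 (σ j))
    (u : Euc n → ℝ) (hu : ContDiff ℝ 3 u) (xbar : Euc n)
    (hgrad : gradient u xbar ≠ 0)
    (htan : ∀ j, ⟪gradient u xbar, σ j xbar⟫ = 0)
    (hK : ∃ lam < (0 : ℝ), ∃ v ≠ 0, Kmat σ u xbar *ᵥ v = lam • v) :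
    STLA (symF σ) (closedBall (0 : Euc m) 1) {x | u x ≤ u xbar} xbar ∧
    (∃ C > (0 : ℝ), ∃ δ > (0 : ℝ), ∀ x ∈ closedBall xbar δ,
      minTime (symF σ) (closedBall (0 : Euc m) 1) {x | u x ≤ u xbar} x ≤
        ENNReal.ofReal (C * ‖x - xbar‖ ^ ((1 : ℝ) / 2))) ∧
    (∀ (lam : ℝ) (v : Fin m ⊕ Fin m → ℝ), v ≠ 0 →
      Kmat σ u xbar *ᵥ v = lam • v →
      (∀ μ : ℝ, (∃ w ≠ 0, Kmat σ u xbar *ᵥ w = μ • w) → lam ≤ μ) →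
      (∑ i, v (Sum.inl i) ^ 2 ≤ 1) → (∑ i, v (Sum.inr i) ^ 2 ≤ 1) →
      ∃ δ > (0 : ℝ), ∀ x₀ ∈ closedBall xbar δ, ∃ t > (0 : ℝ), ∃ x : ℝ → Euc n,
        IsSwitchTraj (fun y => ∑ j, v (Sum.inl j) • σ j y)
          (fun y => ∑ j, v (Sum.inr j) • σ j y) t x₀ x ∧
        u (x (2 * t)) ≤ u xbar) := by
  classical
  obtain ⟨lam0, hlam0, v0, hv0, heig0⟩ := hK
  have hS0 : 0 < ∑ p, v0 p ^ 2 := by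
    obtain ⟨p, hp⟩ := Function.ne_iff.mp hv0
    have h1 : 0 < v0 p ^ 2 := lt_of_le_of_ne (sq_nonneg _) (Ne.symm (pow_ne_zero 2 hp))
    have h2 : v0 p ^ 2 ≤ ∑ p, v0 p ^ 2 :=
      Finset.single_le_sum (fun q _ => sq_nonneg (v0 q)) (Finset.mem_univ p)
    linarith
  set Nv : ℝ := Real.sqrt (∑ p, v0 p ^ 2) with hNv
  have hNvpos : 0 < Nv := Real.sqrt_pos.mpr hS0
  set w : Fin m ⊕ Fin m → ℝ := fun p => v0 p / Nv with hwdef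
  have hwne : w ≠ 0 := by
    intro hcon
    obtain ⟨p, hp⟩ := Function.ne_iff.mp hv0
    have h1 : w p = 0 := by rw [hcon]; rfl
    rw [hwdef] at h1
    simp only [div_eq_zero_iff] at h1
    rcases h1 with h1 | h1
    · exact hp h1
    · exact hNvpos.ne' h1
  have hweig : Kmat σ u xbar *ᵥ w = lam0 • w := by
    have h1 : w = Nv⁻¹ • v0 := by
      funext p
      simp [hwdef, div_eq_inv_mul]
    rw [h1, Matrix.mulVec_smul, heig0, smul_comm]
  have hNv2 : Nv ^ 2 = ∑ p, v0 p ^ 2 := Real.sq_sqrt hS0.le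
  have htot : (∑ i, v0 (Sum.inl i) ^ 2) + (∑ i, v0 (Sum.inr i) ^ 2) = ∑ p, v0 p ^ 2 := by
    rw [Fintype.sum_sum_type]
  have hinl : (0:ℝ) ≤ ∑ i, v0 (Sum.inl i) ^ 2 := Finset.sum_nonneg fun i _ => sq_nonneg _
  have hinr : (0:ℝ) ≤ ∑ i, v0 (Sum.inr i) ^ 2 := Finset.sum_nonneg fun i _ => sq_nonneg _
  have hal : ∑ i, w (Sum.inl i) ^ 2 ≤ 1 := by
    have h1 : ∑ i, w (Sum.inl i) ^ 2 = (∑ i, v0 (Sum.inl i) ^ 2) / (∑ p, v0 p ^ 2) := by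
      simp_rw [hwdef, div_pow]
      rw [← Finset.sum_div, hNv2]
    rw [h1, div_le_one hS0]
    linarith
  have har : ∑ i, w (Sum.inr i) ^ 2 ≤ 1 := by
    have h1 : ∑ i, w (Sum.inr i) ^ 2 = (∑ i, v0 (Sum.inr i) ^ 2) / (∑ p, v0 p ^ 2) := by
      simp_rw [hwdef, div_pow]
      rw [← Finset.sum_div, hNv2]
    rw [h1, div_le_one hS0]
    linarith
  obtain ⟨K, hKpos, δ, hδpos, hδ1, hcore⟩ :=
    core σ hσ u hu xbar htan lam0 hlam0 w hwne hweig hal har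
  have hreach : ∀ x₀ ∈ closedBall xbar δ, ∀ t : ℝ, 0 < t →
      K * Real.sqrt ‖x₀ - xbar‖ ≤ t → t ≤ K * Real.sqrt δ →
      ∃ (aa : ℝ → Euc m) (xx : ℝ → Euc n),
        IsTraj (symF σ) (closedBall (0 : Euc m) 1) aa xx ∧ xx 0 = x₀ ∧
        u (xx (2*t)) ≤ u xbar := by
    intro x₀ hx₀ t ht h1 h2
    obtain ⟨x, hx0, hxc, hd1, hd2, hlo, hhi, hfin⟩ := hcore x₀ hx₀ t ht h1 h2
    exact ⟨switchCtrl w t, x, switch_isTraj σ hσ w hal har t ht x hxc hd1 hd2 hhi, hx0, hfin⟩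
  refine ⟨?_, ?_, ?_⟩
  · -- STLA
    intro T hT
    have h2K : (0:ℝ) < 2 * K := by linarith
    set δ' : ℝ := min δ ((T / (2*K)) ^ 2) with hδ'def
    have hδ'pos : 0 < δ' := lt_min hδpos (pow_pos (div_pos hT h2K) 2)
    have hball : ball xbar δ' ⊆
        ReachSet (symF σ) (closedBall (0 : Euc m) 1) {x | u x ≤ u xbar} T := by
      intro y hy
      by_cases hu_y : u y ≤ u xbar
      · exact ⟨fun _ => 0, fun _ => y, 0, const_isTraj σ y, rfl, le_rfl, hT.le, hu_y⟩
      · push_neg at hu_y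
        have hyd : dist y xbar ≤ δ' := (mem_ball.mp hy).le
        have hyδ : y ∈ closedBall xbar δ :=
          mem_closedBall.mpr (le_trans hyd (min_le_left _ _))
        have hrpos : 0 < ‖y - xbar‖ := by
          rw [norm_pos_iff, sub_ne_zero]
          intro hcon
          rw [hcon] at hu_y
          exact lt_irrefl _ hu_y
        have ht0 : 0 < K * Real.sqrt ‖y - xbar‖ :=
          mul_pos hKpos (Real.sqrt_pos.mpr hrpos)
        have hrδ : ‖y - xbar‖ ≤ δ := by
          rw [← dist_eq_norm]
          exact mem_closedBall.mp hyδ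
        have hup : K * Real.sqrt ‖y - xbar‖ ≤ K * Real.sqrt δ :=
          mul_le_mul_of_nonneg_left (Real.sqrt_le_sqrt hrδ) hKpos.le
        obtain ⟨aa, xx, htraj, h0, hfin⟩ := hreach y hyδ _ ht0 le_rfl hup
        have hhalf : K * Real.sqrt ‖y - xbar‖ ≤ T / 2 := by
          have h1 : ‖y - xbar‖ ≤ (T / (2*K)) ^ 2 := by
            rw [← dist_eq_norm]
            exact le_trans hyd (min_le_right _ _)
          have h2 : Real.sqrt ‖y - xbar‖ ≤ T / (2*K) := by
            calc Real.sqrt ‖y - xbar‖ ≤ Real.sqrt ((T / (2*K)) ^ 2) := Real.sqrt_le_sqrt h1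
            _ = T / (2*K) := Real.sqrt_sq (div_nonneg hT.le h2K.le)
          have h3 : K * Real.sqrt ‖y - xbar‖ ≤ K * (T / (2*K)) :=
            mul_le_mul_of_nonneg_left h2 hKpos.le
          have h4 : K * (T / (2*K)) = T / 2 := by
            field_simp
          linarith
        exact ⟨aa, xx, 2 * (K * Real.sqrt ‖y - xbar‖), htraj, h0, by linarith,
          by linarith, hfin⟩
    have : xbar ∈ ball xbar δ' := mem_ball_self hδ'pos
    exact mem_interior.mpr ⟨ball xbar δ', hball, isOpen_ball, this⟩
  · -- min time estimate
    refine ⟨2 * K, by linarith, δ, hδpos, fun y hy => ?_⟩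
    by_cases hu_y : u y ≤ u xbar
    · have hmem : (0 : ℝ≥0∞) ∈ {θ : ℝ≥0∞ | ∃ (a : ℝ → Euc m) (x : ℝ → Euc n) (t : ℝ),
          IsTraj (symF σ) (closedBall (0 : Euc m) 1) a x ∧ x 0 = y ∧ 0 ≤ t ∧
          x t ∈ {x | u x ≤ u xbar} ∧ (0 : ℝ≥0∞) = ENNReal.ofReal t} :=
        ⟨fun _ => 0, fun _ => y, 0, const_isTraj σ y, rfl, le_rfl, hu_y, by simp⟩
      calc minTime (symF σ) (closedBall (0 : Euc m) 1) {x | u x ≤ u xbar} y ≤ 0 :=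
            sInf_le hmem
      _ ≤ _ := zero_le
    · push_neg at hu_y
      have hrpos : 0 < ‖y - xbar‖ := by
        rw [norm_pos_iff, sub_ne_zero]
        intro hcon
        rw [hcon] at hu_y
        exact lt_irrefl _ hu_y
      have ht0 : 0 < K * Real.sqrt ‖y - xbar‖ := mul_pos hKpos (Real.sqrt_pos.mpr hrpos)
      have hrδ : ‖y - xbar‖ ≤ δ := by
        rw [← dist_eq_norm]
        exact mem_closedBall.mp hy
      have hup : K * Real.sqrt ‖y - xbar‖ ≤ K * Real.sqrt δ :=
        mul_le_mul_of_nonneg_left (Real.sqrt_le_sqrt hrδ) hKpos.le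
      obtain ⟨aa, xx, htraj, h0, hfin⟩ := hreach y hy _ ht0 le_rfl hup
      have hmem : ENNReal.ofReal (2 * (K * Real.sqrt ‖y - xbar‖)) ∈
          {θ : ℝ≥0∞ | ∃ (a : ℝ → Euc m) (x : ℝ → Euc n) (t : ℝ),
          IsTraj (symF σ) (closedBall (0 : Euc m) 1) a x ∧ x 0 = y ∧ 0 ≤ t ∧
          x t ∈ {x | u x ≤ u xbar} ∧
          ENNReal.ofReal (2 * (K * Real.sqrt ‖y - xbar‖)) = ENNReal.ofReal t} :=
        ⟨aa, xx, 2 * (K * Real.sqrt ‖y - xbar‖), htraj, h0, by linarith, hfin, rfl⟩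
      rw [show (2:ℝ) * K * ‖y - xbar‖ ^ ((1:ℝ)/2) = 2 * (K * Real.sqrt ‖y - xbar‖) from by
        rw [Real.sqrt_eq_rpow]; ring]
      exact sInf_le hmem
  · -- single switch statement
    intro lam v hvne heig hmin hal2 har2
    have hlamneg : lam < 0 := lt_of_le_of_lt (hmin lam0 ⟨v0, hv0, heig0⟩) hlam0
    obtain ⟨K2, hK2pos, δ2, hδ2pos, hδ21, hcore2⟩ :=
      core σ hσ u hu xbar htan lam hlamneg v hvne heig hal2 har2
    refine ⟨δ2, hδ2pos, fun x₀ hx₀ => ?_⟩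
    have ht0 : 0 < K2 * Real.sqrt δ2 := mul_pos hK2pos (Real.sqrt_pos.mpr hδ2pos)
    have hlow : K2 * Real.sqrt ‖x₀ - xbar‖ ≤ K2 * Real.sqrt δ2 := by
      apply mul_le_mul_of_nonneg_left _ hK2pos.le
      apply Real.sqrt_le_sqrt
      rw [← dist_eq_norm]
      exact mem_closedBall.mp hx₀
    obtain ⟨x, hx0, hxc, hd1, hd2, hlo, hhi, hfin⟩ :=
      hcore2 x₀ hx₀ (K2 * Real.sqrt δ2) ht0 hlow le_rfl
    exact ⟨K2 * Real.sqrt δ2, ht0, x, ⟨hx0, hxc.continuousOn, hd1, hd2⟩, hfin⟩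
end

section
/- Let S be a real m×m matrix, S* = (S + ᵗS)/2 its symmetric part, and K the symmetric 2m×2m block matrix K = [[S*, ᵗS],[S, S*]]. Then K is positive semidefinite if and only if S is symmetric and positive semidefinite. In particular, if S is not both symmetric and positive semidefinite, then K has a negative eigenvalue. -/
open Set Filter Metric Matrix MeasureTheory Asymptotics
open scoped RealInnerProductSpace ENNReal Topology

lemma st14_tdot {m : ℕ} (S : Matrix (Fin m) (Fin m) ℝ) (x y : Fin m → ℝ) :
    Sᵀ *ᵥ x ⬝ᵥ y = S *ᵥ y ⬝ᵥ x := by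
  rw [mulVec_transpose, ← dotProduct_mulVec, dotProduct_comm]

lemma st14_key {m : ℕ} (S : Matrix (Fin m) (Fin m) ℝ) (a b : Fin m → ℝ) :
    Kof S *ᵥ Sum.elim a b ⬝ᵥ Sum.elim a b =
      S *ᵥ a ⬝ᵥ a + S *ᵥ b ⬝ᵥ b + 2 * (S *ᵥ a ⬝ᵥ b) := by
  rw [Kof, fromBlocks_mulVec, sumElim_dotProduct_sumElim]
  simp only [add_mulVec, smul_mulVec, add_dotProduct, smul_dotProduct, smul_eq_mul,
    Sum.elim_comp_inl, Sum.elim_comp_inr, st14_tdot S a a, st14_tdot S b a, st14_tdot S b b]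
  ring

lemma st14_iff {m : ℕ} (S : Matrix (Fin m) (Fin m) ℝ) :
    (∀ v : Fin m ⊕ Fin m → ℝ, 0 ≤ Kof S *ᵥ v ⬝ᵥ v) ↔
      S.IsSymm ∧ ∀ a : Fin m → ℝ, 0 ≤ S *ᵥ a ⬝ᵥ a := by
  constructor
  · intro h
    have hpsd : ∀ a : Fin m → ℝ, 0 ≤ S *ᵥ a ⬝ᵥ a := by
      intro a
      have := h (Sum.elim a a)
      rw [st14_key] at this
      linarith
    refine ⟨?_, hpsd⟩
    have claim : ∀ a c : Fin m → ℝ, S *ᵥ a ⬝ᵥ c = Sᵀ *ᵥ a ⬝ᵥ c := by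
      intro a c
      set q := S *ᵥ c ⬝ᵥ c with hq
      set e := S *ᵥ a ⬝ᵥ c - S *ᵥ c ⬝ᵥ a with he
      have hq0 : 0 ≤ q := hpsd c
      have ht : ∀ t : ℝ, 0 ≤ t ^ 2 * q + t * e := by
        intro t
        have h0 := h (Sum.elim a (-a + t • c))
        rw [st14_key] at h0
        have expand : S *ᵥ a ⬝ᵥ a + S *ᵥ (-a + t • c) ⬝ᵥ (-a + t • c) +
            2 * (S *ᵥ a ⬝ᵥ (-a + t • c)) = t ^ 2 * q + t * e := by
          rw [hq, he]
          simp only [mulVec_add, mulVec_neg, mulVec_smul, dotProduct_add, add_dotProduct,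
            dotProduct_neg, neg_dotProduct, dotProduct_smul, smul_dotProduct, smul_eq_mul]
          ring
        linarith [expand ▸ h0]
      have he0 : e = 0 := by
        have h1 := ht (-(e / (q + 1)))
        have hq1 : 0 < q + 1 := by linarith
        have h2 : (-(e / (q + 1))) ^ 2 * q + (-(e / (q + 1))) * e =
            (e ^ 2 / (q + 1) ^ 2) * (q - (q + 1)) := by
          field_simp
          ring
        rw [h2] at h1
        have hpos : (0 : ℝ) < (q + 1) ^ 2 := by positivity
        have h3 : e ^ 2 / (q + 1) ^ 2 ≤ 0 := by nlinarith
        have h4 : e ^ 2 ≤ 0 := by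
          calc e ^ 2 = e ^ 2 / (q + 1) ^ 2 * (q + 1) ^ 2 := by field_simp
            _ ≤ 0 := mul_nonpos_of_nonpos_of_nonneg h3 hpos.le
        have h5 : e ^ 2 = 0 := le_antisymm h4 (sq_nonneg e)
        exact pow_eq_zero_iff two_ne_zero |>.mp h5
      rw [st14_tdot]
      linarith [he0, he]
    ext i j
    have := claim (Pi.single j 1) (Pi.single i 1)
    rw [st14_tdot] at this
    simpa [mulVec_single, dotProduct_single] using this.symm
  · rintro ⟨hs, hpsd⟩ v
    have hv : v = Sum.elim (v ∘ Sum.inl) (v ∘ Sum.inr) := (Sum.elim_comp_inl_inr v).symm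
    rw [hv, st14_key]
    set a := v ∘ Sum.inl
    set b := v ∘ Sum.inr
    have hba : S *ᵥ b ⬝ᵥ a = S *ᵥ a ⬝ᵥ b := by
      rw [← st14_tdot S a b, hs.eq]
    have h2 : S *ᵥ (a + b) ⬝ᵥ (a + b) = S *ᵥ a ⬝ᵥ a + S *ᵥ b ⬝ᵥ b + 2 * (S *ᵥ a ⬝ᵥ b) := by
      simp only [mulVec_add, dotProduct_add, add_dotProduct]
      linarith
    linarith [hpsd (a + b), h2]


/-- Theorem 4.6: `K` is positive semidefinite if and only if `S` is symmetric
and positive semidefinite; in particular if `S` is not both symmetric and positive semidefinite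
then `K` has a negative eigenvalue. -/
theorem statement14 {m : ℕ} (S : Matrix (Fin m) (Fin m) ℝ) :
    ((∀ v : Fin m ⊕ Fin m → ℝ, 0 ≤ Kof S *ᵥ v ⬝ᵥ v) ↔
      S.IsSymm ∧ ∀ a : Fin m → ℝ, 0 ≤ S *ᵥ a ⬝ᵥ a) ∧
    (¬(S.IsSymm ∧ ∀ a : Fin m → ℝ, 0 ≤ S *ᵥ a ⬝ᵥ a) →
      ∃ lam < (0 : ℝ), ∃ v ≠ 0, Kof S *ᵥ v = lam • v) := by
  refine ⟨st14_iff S, fun hns => ?_⟩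
  have hK : (Kof S).IsHermitian := by
    rw [Matrix.IsHermitian, conjTranspose_eq_transpose_of_trivial, Kof, fromBlocks_transpose]
    simp [transpose_smul, transpose_add, transpose_transpose, add_comm]
  have hex : ∃ i, hK.eigenvalues i < 0 := by
    by_contra hc
    push_neg at hc
    have hps := hK.posSemidef_iff_eigenvalues_nonneg.mpr hc
    exact hns ((st14_iff S).mp fun v => by simpa [dotProduct_comm] using hps.dotProduct_mulVec_nonneg v)
  obtain ⟨i, hi⟩ := hex
  exact ⟨_, hi, _, (WithLp.ofLp_eq_zero (p := 2)).not.mpr (hK.eigenvectorBasis.orthonormal.ne_zero i), hK.mulVec_eigenvectorBasis i⟩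
end

section
/- Let σ₀ ∈ C¹(ℝⁿ;ℝⁿ), σ ∈ C¹(ℝⁿ;ℝ^{n×m}), u ∈ C²(ℝⁿ), a₁, a₂ ∈ B₁(0) ⊂ ℝᵐ, and x₀ ∈ ℝⁿ. For each t > 0 let x^t be the single-switch trajectory with data (σ₀ + σa₁, σ₀ + σa₂, t, x₀). Then as t → 0⁺: u(x^t(2t)) − u(x₀) = ∇u(x₀)·( 2σ₀(x₀) + σ(x₀)(a₁+a₂) ) t + K̃(x₀)(1,a₁,1,a₂)·(1,a₁,1,a₂) t²/2 + o(t²), where (1,a₁,1,a₂) ∈ ℝ^{2(m+1)} is the concatenation of (1,a₁) and (1,a₂). -/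
open Set Filter Metric Matrix MeasureTheory Asymptotics
open scoped RealInnerProductSpace ENNReal Topology

section SixteenHelpers

open Set Filter Metric Matrix Asymptotics
open scoped Topology

lemma mvt_Icc {E : Type*} [NormedAddCommGroup E] [NormedSpace ℝ E] {y v : ℝ → E}
    {a b M : ℝ} (hab : a ≤ b) (hy : ContinuousOn y (Icc a b))
    (hd : ∀ s ∈ Ioo a b, HasDerivAt y (v s) s)
    (hb : ∀ s ∈ Ioo a b, ‖v s‖ ≤ M) : ‖y b - y a‖ ≤ M * (b - a) := by
  rcases eq_or_lt_of_le hab with rfl | hlt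
  · simp
  have key : ∀ a' ∈ Ioo a b, ‖y b - y a'‖ ≤ M * (b - a') := by
    intro a' ha'
    have := norm_image_sub_le_of_norm_deriv_right_le_segment
      (f := y) (f' := v) (a := a') (b := b)
      (hy.mono (Icc_subset_Icc ha'.1.le le_rfl))
      (fun s hs => (hd s ⟨lt_of_lt_of_le ha'.1 hs.1, hs.2⟩).hasDerivWithinAt)
      (fun s hs => hb s ⟨lt_of_lt_of_le ha'.1 hs.1, hs.2⟩)
    exact this b ⟨ha'.2.le, le_rfl⟩
  have hIoo : Ioo a b ∈ 𝓝[>] a := mem_nhdsWithin.2 ⟨Iio b, isOpen_Iio, hlt, by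
    intro z hz; exact ⟨hz.2, hz.1⟩⟩
  have hIcc : Icc a b ∈ 𝓝[>] a := mem_of_superset hIoo Ioo_subset_Icc_self
  have h1 : Tendsto (fun a' => ‖y b - y a'‖) (𝓝[>] a) (𝓝 ‖y b - y a‖) := by
    have hyt : Tendsto y (𝓝[>] a) (𝓝 (y a)) :=
      (hy a ⟨le_rfl, hab⟩).mono_left (nhdsWithin_le_of_mem hIcc)
    exact (tendsto_const_nhds.sub hyt).norm
  have h2 : Tendsto (fun a' => M * (b - a')) (𝓝[>] a) (𝓝 (M * (b - a))) :=
    ((tendsto_const_nhds.sub (tendsto_nhdsWithin_of_tendsto_nhds tendsto_id)).const_mul M)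
  refine le_of_tendsto_of_tendsto h1 h2 ?_
  filter_upwards [hIoo] with a' ha' using key a' ha'

/-- On a single-switch trajectory, the state stays within `M * s` of the start, for small `t`. -/
lemma traj_close {n : ℕ} {f₁ f₂ : Euc n → Euc n} (h₁ : Continuous f₁) (h₂ : Continuous f₂)
    {x₀ : Euc n} {X : ℝ → ℝ → Euc n}
    (hX : ∀ t > (0:ℝ), IsSwitchTraj f₁ f₂ t x₀ (X t)) :
    ∃ M : ℝ, 0 < M ∧ ∀ᶠ t in 𝓝[>] (0:ℝ), ∀ s ∈ Icc (0:ℝ) (2*t), ‖X t s - x₀‖ ≤ M * s := by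
  obtain ⟨M₁, hM₁⟩ := (isCompact_closedBall x₀ 1).exists_bound_of_continuousOn h₁.continuousOn
  obtain ⟨M₂, hM₂⟩ := (isCompact_closedBall x₀ 1).exists_bound_of_continuousOn h₂.continuousOn
  set M : ℝ := max M₁ M₂ + 1 with hM
  have hMpos : 0 < M := by
    have : (0:ℝ) ≤ M₁ := le_trans (norm_nonneg _) (hM₁ x₀ (mem_closedBall_self zero_le_one))
    have h : (0:ℝ) ≤ max M₁ M₂ := le_trans this (le_max_left _ _)
    linarith
  have hb₁ : ∀ y ∈ closedBall x₀ 1, ‖f₁ y‖ ≤ M := fun y hy =>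
    le_trans (hM₁ y hy) (by simp [hM]; linarith [le_max_left M₁ M₂])
  have hb₂ : ∀ y ∈ closedBall x₀ 1, ‖f₂ y‖ ≤ M := fun y hy =>
    le_trans (hM₂ y hy) (by simp [hM]; linarith [le_max_right M₁ M₂])
  refine ⟨M, hMpos, ?_⟩
  have hmem : Ioo (0:ℝ) (1 / (4 * M)) ∈ 𝓝[>] (0:ℝ) :=
    mem_nhdsWithin.2 ⟨Iio (1 / (4 * M)), isOpen_Iio, by simp; positivity, by
      intro z hz; exact ⟨hz.2, hz.1⟩⟩
  filter_upwards [hmem] with t ht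
  have htpos : 0 < t := ht.1
  have h2tM : 2 * t * M ≤ 2⁻¹ := by
    have h4 : t * (4 * M) < 1 := (lt_div_iff₀ (by positivity)).1 ht.2
    nlinarith [hMpos]
  obtain ⟨hx0, hxc, hd1, hd2⟩ := hX t htpos
  set x : ℝ → Euc n := X t
  -- claim C: conditional bound
  have claimC : ∀ s ∈ Icc (0:ℝ) (2*t), (∀ r ∈ Icc 0 s, ‖x r - x₀‖ ≤ 1) → ‖x s - x₀‖ ≤ M * s := by
    intro s hs hin
    have hball : ∀ r ∈ Icc (0:ℝ) s, x r ∈ closedBall x₀ 1 := by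
      intro r hr; rw [mem_closedBall, dist_eq_norm]; exact hin r hr
    rcases le_or_gt s t with hst | hst
    · have := mvt_Icc (y := x) (v := fun r => f₁ (x r)) (a := 0) (b := s) (M := M) hs.1
        (hxc.mono (Icc_subset_Icc le_rfl hs.2))
        (fun r hr => hd1 r ⟨hr.1, lt_of_lt_of_le hr.2 hst⟩)
        (fun r hr => hb₁ _ (hball r ⟨hr.1.le, hr.2.le⟩))
      rw [hx0] at this; simpa using this
    · have hts : t ≤ s := hst.le
      have e1 : ‖x t - x₀‖ ≤ M * t := by
        have := mvt_Icc (y := x) (v := fun r => f₁ (x r)) (a := 0) (b := t) (M := M) htpos.le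
          (hxc.mono (Icc_subset_Icc le_rfl (by linarith)))
          (fun r hr => hd1 r hr)
          (fun r hr => hb₁ _ (hball r ⟨hr.1.le, le_trans hr.2.le hts⟩))
        rw [hx0] at this; simpa using this
      have e2 : ‖x s - x t‖ ≤ M * (s - t) := by
        apply mvt_Icc (y := x) (v := fun r => f₂ (x r)) (a := t) (b := s) (M := M) hts
          (hxc.mono (Icc_subset_Icc htpos.le hs.2))
          (fun r hr => hd2 r ⟨hr.1, lt_of_lt_of_le hr.2 hs.2⟩)
          (fun r hr => hb₂ _ (hball r ⟨le_trans htpos.le hr.1.le, hr.2.le⟩))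
      calc ‖x s - x₀‖ ≤ ‖x s - x t‖ + ‖x t - x₀‖ := norm_sub_le_norm_sub_add_norm_sub _ _ _
        _ ≤ M * (s - t) + M * t := add_le_add e2 e1
        _ = M * s := by ring
  -- bootstrap: the trajectory never reaches distance 1
  have hall : ∀ r ∈ Icc (0:ℝ) (2*t), ‖x r - x₀‖ < 1 := by
    by_contra hcon
    push_neg at hcon
    obtain ⟨r₀, hr₀, hr₀1⟩ := hcon
    set S : Set ℝ := {r | r ∈ Icc (0:ℝ) (2*t) ∧ 1 ≤ ‖x r - x₀‖} with hSdef
    have hSne : S.Nonempty := ⟨r₀, hr₀, hr₀1⟩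
    have hSclosed : IsClosed S := by
      have : S = Icc (0:ℝ) (2*t) ∩ (fun r => ‖x r - x₀‖) ⁻¹' (Ici 1) := by
        ext r; exact ⟨fun h => ⟨h.1, h.2⟩, fun h => ⟨h.1, h.2⟩⟩
      rw [this]
      exact ContinuousOn.preimage_isClosed_of_isClosed
        ((hxc.sub continuousOn_const).norm) isClosed_Icc isClosed_Ici
    have hSbdd : BddBelow S := ⟨0, fun r hr => hr.1.1⟩
    set s₁ : ℝ := sInf S with hs₁def
    have hs₁S : s₁ ∈ S := hSclosed.csInf_mem hSne hSbdd
    have hs₁pos : 0 < s₁ := by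
      rcases eq_or_lt_of_le hs₁S.1.1 with h | h
      · exfalso; have := hs₁S.2; rw [← h, hx0] at this; simp at this; linarith
      · exact h
    have hsmall : ∀ r ∈ Ico (0:ℝ) s₁, ‖x r - x₀‖ ≤ 2⁻¹ := by
      intro r hr
      have hrIcc : r ∈ Icc (0:ℝ) (2*t) := ⟨hr.1, le_trans hr.2.le hs₁S.1.2⟩
      have hle1 : ∀ r' ∈ Icc (0:ℝ) r, ‖x r' - x₀‖ ≤ 1 := by
        intro r' hr'
        by_contra hcon'
        push_neg at hcon'
        have : r' ∈ S := ⟨⟨hr'.1, le_trans hr'.2 hrIcc.2⟩, hcon'.le⟩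
        have := csInf_le hSbdd this
        have : s₁ ≤ r := le_trans this hr'.2
        exact absurd this (not_le.2 hr.2)
      calc ‖x r - x₀‖ ≤ M * r := claimC r hrIcc hle1
        _ ≤ M * (2*t) := by
            have := hrIcc.2; nlinarith [hMpos]
        _ ≤ 2⁻¹ := by nlinarith
    have hne : Filter.NeBot (𝓝[Ico (0:ℝ) s₁] s₁) := by
      rw [← mem_closure_iff_nhdsWithin_neBot, closure_Ico (ne_of_lt hs₁pos)]
      exact ⟨hs₁pos.le, le_rfl⟩
    have htd : Tendsto x (𝓝[Ico (0:ℝ) s₁] s₁) (𝓝 (x s₁)) :=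
      (hxc s₁ hs₁S.1).mono_left
        (nhdsWithin_mono _ (fun r hr => ⟨hr.1, le_trans hr.2.le hs₁S.1.2⟩))
    have hlim : ‖x s₁ - x₀‖ ≤ 2⁻¹ := by
      refine le_of_tendsto (f := fun r => ‖x r - x₀‖) ((htd.sub tendsto_const_nhds).norm) ?_
      filter_upwards [self_mem_nhdsWithin] with r hr using hsmall r hr
    linarith [hs₁S.2, hlim]
  intro s hs
  exact claimC s hs (fun r hr => (hall r ⟨hr.1, le_trans hr.2 hs.2⟩).le)

lemma dsum_congr {k : ℕ} {g h : Fin k → Fin k → ℝ} (H : ∀ i j, g i j = h i j) :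
    ∑ i, ∑ j, g i j = ∑ i, ∑ j, h i j :=
  Finset.sum_congr rfl fun i _ => Finset.sum_congr rfl fun j _ => H i j

lemma dsum_comm {k : ℕ} (g : Fin k → Fin k → ℝ) :
    ∑ i, ∑ j, g i j = ∑ i, ∑ j, g j i := Finset.sum_comm

lemma Kof_quad {k : ℕ} (S : Matrix (Fin k) (Fin k) ℝ) (p q : Fin k → ℝ) :
    (Kof S *ᵥ Sum.elim p q) ⬝ᵥ Sum.elim p q =
      (∑ i, ∑ j, p i * p j * S i j) + 2 * (∑ i, ∑ j, q i * p j * S i j) +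
        (∑ i, ∑ j, q i * q j * S i j) := by
  have dsum_add : ∀ g h : Fin k → Fin k → ℝ,
      ∑ i, ∑ j, (g i j + h i j) = (∑ i, ∑ j, g i j) + ∑ i, ∑ j, h i j := by
    intro g h
    rw [← Finset.sum_add_distrib]
    exact Finset.sum_congr rfl fun i _ => Finset.sum_add_distrib
  have hsym : ∀ c : Fin k → ℝ, (∑ i, ∑ j, 2⁻¹ * (S i j + S j i) * c j * c i)
      = ∑ i, ∑ j, c i * c j * S i j := by
    intro c
    rw [dsum_congr (h := fun i j => 2⁻¹ * (c i * c j * S i j) + 2⁻¹ * (c i * c j * S j i))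
      (fun i j => by ring), dsum_add,
      dsum_comm (fun i j => 2⁻¹ * (c i * c j * S j i)),
      dsum_congr (g := fun i j => 2⁻¹ * (c j * c i * S i j))
        (h := fun i j => 2⁻¹ * (c i * c j * S i j)) (fun i j => by ring),
      ← Finset.sum_add_distrib]
    exact Finset.sum_congr rfl fun i _ => by
      rw [← Finset.sum_add_distrib]
      exact Finset.sum_congr rfl fun j _ => by ring
  rw [Kof, Matrix.fromBlocks_mulVec, sumElim_dotProduct_sumElim,
    add_dotProduct, add_dotProduct]
  simp only [Matrix.mulVec, dotProduct, Matrix.smul_apply, Matrix.add_apply,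
    Matrix.transpose_apply, smul_eq_mul, Finset.sum_mul, Sum.elim_comp_inl, Sum.elim_comp_inr]
  rw [hsym p, hsym q, dsum_comm (fun i j => S j i * q j * p i),
    dsum_congr (g := fun i j => S i j * q i * p j) (h := fun i j => q i * p j * S i j)
      (fun i j => by ring),
    dsum_congr (g := fun i j => S i j * p j * q i) (h := fun i j => q i * p j * S i j)
      (fun i j => by ring)]
  ring

/-- Abstract second-order expansion along a single-switch trajectory. -/
lemma key_est {n : ℕ} {f₁ f₂ : Euc n → Euc n} {u H₁ H₂ G11 G21 G22 : Euc n → ℝ}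
    {x₀ : Euc n} {X : ℝ → ℝ → Euc n} {c11 c21 c22 : ℝ}
    (hf₁ : Continuous f₁) (hf₂ : Continuous f₂)
    (hucont : Continuous u) (hH₁cont : Continuous H₁) (hH₂cont : Continuous H₂)
    (hG11c : Continuous G11) (hG21c : Continuous G21) (hG22c : Continuous G22)
    (hc11 : G11 x₀ = c11) (hc21 : G21 x₀ = c21) (hc22 : G22 x₀ = c22)
    (hchain_u1 : ∀ (x : ℝ → Euc n) (s : ℝ), HasDerivAt x (f₁ (x s)) s →
      HasDerivAt (fun r => u (x r)) (H₁ (x s)) s)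
    (hchain_u2 : ∀ (x : ℝ → Euc n) (s : ℝ), HasDerivAt x (f₂ (x s)) s →
      HasDerivAt (fun r => u (x r)) (H₂ (x s)) s)
    (hchain_11 : ∀ (x : ℝ → Euc n) (s : ℝ), HasDerivAt x (f₁ (x s)) s →
      HasDerivAt (fun r => H₁ (x r)) (G11 (x s)) s)
    (hchain_21 : ∀ (x : ℝ → Euc n) (s : ℝ), HasDerivAt x (f₁ (x s)) s →
      HasDerivAt (fun r => H₂ (x r)) (G21 (x s)) s)
    (hchain_22 : ∀ (x : ℝ → Euc n) (s : ℝ), HasDerivAt x (f₂ (x s)) s →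
      HasDerivAt (fun r => H₂ (x r)) (G22 (x s)) s)
    (hX : ∀ t > (0:ℝ), IsSwitchTraj f₁ f₂ t x₀ (X t)) :
    (fun t : ℝ => u (X t (2*t)) - u x₀ - t * (H₁ x₀ + H₂ x₀)
        - t^2/2 * (c11 + 2*c21 + c22)) =o[𝓝[>] (0:ℝ)] fun t => t^2 := by
  obtain ⟨M, hM, hev⟩ := traj_close hf₁ hf₂ hX
  have key : ∀ ε > (0:ℝ), ∀ᶠ t in 𝓝[>] (0:ℝ),
      |u (X t (2*t)) - u x₀ - t * (H₁ x₀ + H₂ x₀) - t^2/2 * (c11 + 2*c21 + c22)| ≤ ε * t^2 := by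
    intro ε hε
    set ε' : ℝ := ε/3 with hε'def
    have hε' : 0 < ε' := by positivity
    obtain ⟨r1, hr1, hB1⟩ := Metric.continuousAt_iff.1 hG11c.continuousAt ε' hε'
    obtain ⟨r2, hr2, hB2⟩ := Metric.continuousAt_iff.1 hG21c.continuousAt ε' hε'
    obtain ⟨r3, hr3, hB3⟩ := Metric.continuousAt_iff.1 hG22c.continuousAt ε' hε'
    set r : ℝ := min r1 (min r2 r3) with hrdef
    have hrpos : 0 < r := lt_min hr1 (lt_min hr2 hr3)
    have hmem : Ioo (0:ℝ) (r/(2*M+1)) ∈ 𝓝[>] (0:ℝ) :=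
      mem_nhdsWithin.2 ⟨Iio (r/(2*M+1)), isOpen_Iio, by
        simp only [mem_Iio]; positivity, by intro z hz; exact ⟨hz.2, hz.1⟩⟩
    filter_upwards [hev, hmem] with t hclose ht
    have htpos : 0 < t := ht.1
    obtain ⟨hx0, hxc, hd1, hd2⟩ := hX t htpos
    set x : ℝ → Euc n := X t with hxdef
    have hnear : ∀ s ∈ Icc (0:ℝ) (2*t), dist (x s) x₀ < r := by
      intro s hs
      rw [dist_eq_norm]
      have h1 : ‖x s - x₀‖ ≤ M * s := hclose s hs
      have h2 : M * s ≤ M * (2*t) := by nlinarith [hs.2, hM]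
      have h3 : M * (2*t) < r := by
        have h4 : t * (2*M+1) < r := by
          have := (lt_div_iff₀ (by positivity : (0:ℝ) < 2*M+1)).1 ht.2
          linarith
        nlinarith [hM, htpos]
      linarith
    have bnd : ∀ s ∈ Icc (0:ℝ) (2*t),
        |G11 (x s) - c11| ≤ ε' ∧ |G21 (x s) - c21| ≤ ε' ∧ |G22 (x s) - c22| ≤ ε' := by
      intro s hs
      have hn := hnear s hs
      refine ⟨?_, ?_, ?_⟩
      · have := hB1 (lt_of_lt_of_le hn (min_le_left _ _))
        rw [Real.dist_eq, hc11] at this; exact this.le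
      · have := hB2 (lt_of_lt_of_le hn ((min_le_right _ _).trans (min_le_left _ _)))
        rw [Real.dist_eq, hc21] at this; exact this.le
      · have := hB3 (lt_of_lt_of_le hn ((min_le_right _ _).trans (min_le_right _ _)))
        rw [Real.dist_eq, hc22] at this; exact this.le
    have ht2 : t ≤ 2 * t := by linarith
    have hcu : ContinuousOn (fun r => u (x r)) (Icc 0 (2*t)) := hucont.comp_continuousOn hxc
    have hcH₁ : ContinuousOn (fun r => H₁ (x r)) (Icc 0 (2*t)) := hH₁cont.comp_continuousOn hxc
    have hcH₂ : ContinuousOn (fun r => H₂ (x r)) (Icc 0 (2*t)) := hH₂cont.comp_continuousOn hxc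
    -- Step A
    have stepA : ∀ s ∈ Icc (0:ℝ) t, |H₁ (x s) - H₁ x₀ - s * c11| ≤ ε' * s := by
      intro s hs
      have hmv := mvt_Icc (y := fun r => H₁ (x r) - r * c11)
          (v := fun r => G11 (x r) - c11) (a := 0) (b := s) (M := ε') hs.1
        ((hcH₁.mono (Icc_subset_Icc le_rfl (hs.2.trans ht2))).sub
          ((continuous_id.mul continuous_const).continuousOn))
        (fun r hr => (hchain_11 x r (hd1 r ⟨hr.1, hr.2.trans_le hs.2⟩)).sub
          (hasDerivAt_mul_const c11))
        (fun r hr => by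
          have := (bnd r ⟨hr.1.le, (hr.2.le.trans hs.2).trans ht2⟩).1
          simpa [Real.norm_eq_abs] using this)
      have heq : H₁ (x s) - H₁ x₀ - s * c11
          = (H₁ (x s) - s * c11) - (H₁ (x 0) - 0 * c11) := by rw [hx0]; ring
      rw [heq, ← Real.norm_eq_abs]
      exact hmv.trans_eq (by ring)
    -- Step B
    have stepB : |u (x t) - u x₀ - t * H₁ x₀ - t^2/2 * c11| ≤ ε' * t * t := by
      have hmv := mvt_Icc (y := fun s => u (x s) - s * H₁ x₀ - s^2/2 * c11)
          (v := fun s => H₁ (x s) - H₁ x₀ - s * c11) (a := 0) (b := t) (M := ε' * t) htpos.le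
        (((hcu.mono (Icc_subset_Icc le_rfl ht2)).sub
            ((continuous_id.mul continuous_const).continuousOn)).sub
          ((((continuous_pow 2).div_const 2).mul continuous_const).continuousOn))
        (fun s hs => by
          have h3 : HasDerivAt (fun s : ℝ => s^2/2 * c11) (s * c11) s := by
            have := ((hasDerivAt_pow 2 s).div_const 2).mul_const c11
            exact this.congr_deriv (by ring)
          exact ((hchain_u1 x s (hd1 s hs)).sub (hasDerivAt_mul_const (H₁ x₀))).sub h3)
        (fun s hs => by
          have h4 := stepA s ⟨hs.1.le, hs.2.le⟩
          have h5 : ε' * s ≤ ε' * t := by nlinarith [hs.2, hε']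
          rw [Real.norm_eq_abs]
          linarith)
      have heq : u (x t) - u x₀ - t * H₁ x₀ - t^2/2 * c11
          = (u (x t) - t * H₁ x₀ - t^2/2 * c11) - (u (x 0) - 0 * H₁ x₀ - 0^2/2 * c11) := by
        rw [hx0]; ring
      rw [heq, ← Real.norm_eq_abs]
      exact hmv.trans_eq (by ring)
    -- Step C
    have stepC : |H₂ (x t) - H₂ x₀ - t * c21| ≤ ε' * t := by
      have hmv := mvt_Icc (y := fun r => H₂ (x r) - r * c21)
          (v := fun r => G21 (x r) - c21) (a := 0) (b := t) (M := ε') htpos.le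
        ((hcH₂.mono (Icc_subset_Icc le_rfl ht2)).sub
          ((continuous_id.mul continuous_const).continuousOn))
        (fun r hr => (hchain_21 x r (hd1 r hr)).sub (hasDerivAt_mul_const c21))
        (fun r hr => by
          have := (bnd r ⟨hr.1.le, hr.2.le.trans ht2⟩).2.1
          simpa [Real.norm_eq_abs] using this)
      have heq : H₂ (x t) - H₂ x₀ - t * c21
          = (H₂ (x t) - t * c21) - (H₂ (x 0) - 0 * c21) := by rw [hx0]; ring
      rw [heq, ← Real.norm_eq_abs]
      exact hmv.trans_eq (by ring)
    -- Step D
    have stepD : ∀ s ∈ Icc t (2*t), |H₂ (x s) - H₂ (x t) - (s - t) * c22| ≤ ε' * (s - t) := by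
      intro s hs
      have hmv := mvt_Icc (y := fun r => H₂ (x r) - (r - t) * c22)
          (v := fun r => G22 (x r) - c22) (a := t) (b := s) (M := ε') hs.1
        ((hcH₂.mono (Icc_subset_Icc (by linarith) hs.2)).sub
          (((continuous_id.sub continuous_const).mul continuous_const).continuousOn))
        (fun r hr => by
          have h5 : HasDerivAt (fun r : ℝ => (r - t) * c22) c22 r := by
            simpa using ((hasDerivAt_id r).sub_const t).mul_const c22
          exact (hchain_22 x r (hd2 r ⟨hr.1, hr.2.trans_le hs.2⟩)).sub h5)
        (fun r hr => by
          have := (bnd r ⟨by linarith [hr.1], hr.2.le.trans hs.2⟩).2.2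
          simpa [Real.norm_eq_abs] using this)
      have heq : H₂ (x s) - H₂ (x t) - (s - t) * c22
          = (H₂ (x s) - (s - t) * c22) - (H₂ (x t) - (t - t) * c22) := by ring
      rw [heq, ← Real.norm_eq_abs]
      exact hmv.trans_eq (by ring)
    -- Step E
    have stepE : |u (x (2*t)) - u (x t) - t * H₂ x₀ - t^2 * c21 - t^2/2 * c22|
        ≤ 2 * ε' * t * t := by
      have hmv := mvt_Icc
          (y := fun s => u (x s) - (s - t) * (H₂ x₀ + t * c21) - (s - t)^2/2 * c22)
          (v := fun s => H₂ (x s) - (H₂ x₀ + t * c21) - (s - t) * c22)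
          (a := t) (b := 2*t) (M := 2 * ε' * t) ht2
        (((hcu.mono (Icc_subset_Icc (by linarith) le_rfl)).sub
            (((continuous_id.sub continuous_const).mul continuous_const).continuousOn)).sub
          (((((continuous_id.sub continuous_const).pow 2).div_const 2).mul
            continuous_const).continuousOn))
        (fun s hs => by
          have h6 : HasDerivAt (fun s : ℝ => (s - t) * (H₂ x₀ + t * c21))
              (H₂ x₀ + t * c21) s := by
            simpa using ((hasDerivAt_id s).sub_const t).mul_const (H₂ x₀ + t * c21)
          have h7 : HasDerivAt (fun s : ℝ => (s - t)^2/2 * c22) ((s - t) * c22) s := by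
            have := ((((hasDerivAt_id s).sub_const t).pow 2).div_const 2).mul_const c22
            exact this.congr_deriv (by simp only [id_eq]; ring)
          exact ((hchain_u2 x s (hd2 s hs)).sub h6).sub h7)
        (fun s hs => by
          have hD := stepD s ⟨hs.1.le, hs.2.le⟩
          have heq : H₂ (x s) - (H₂ x₀ + t * c21) - (s - t) * c22
              = (H₂ (x s) - H₂ (x t) - (s - t) * c22) + (H₂ (x t) - H₂ x₀ - t * c21) := by ring
          show |H₂ (x s) - (H₂ x₀ + t * c21) - (s - t) * c22| ≤ 2 * ε' * t
          rw [heq]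
          have h8 : ε' * (s - t) ≤ ε' * t := by nlinarith [hs.2, hε']
          calc |(H₂ (x s) - H₂ (x t) - (s - t) * c22) + (H₂ (x t) - H₂ x₀ - t * c21)|
              ≤ |H₂ (x s) - H₂ (x t) - (s - t) * c22| + |H₂ (x t) - H₂ x₀ - t * c21| :=
                abs_add_le _ _
            _ ≤ 2 * ε' * t := by linarith)
      have heq : u (x (2*t)) - u (x t) - t * H₂ x₀ - t^2 * c21 - t^2/2 * c22
          = (u (x (2*t)) - (2*t - t) * (H₂ x₀ + t * c21) - (2*t - t)^2/2 * c22)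
            - (u (x t) - (t - t) * (H₂ x₀ + t * c21) - (t - t)^2/2 * c22) := by ring
      rw [heq, ← Real.norm_eq_abs]
      exact hmv.trans_eq (by ring)
    -- combine
    have heq : u (x (2*t)) - u x₀ - t * (H₁ x₀ + H₂ x₀) - t^2/2 * (c11 + 2*c21 + c22)
        = (u (x t) - u x₀ - t * H₁ x₀ - t^2/2 * c11)
          + (u (x (2*t)) - u (x t) - t * H₂ x₀ - t^2 * c21 - t^2/2 * c22) := by ring
    rw [heq]
    calc |(u (x t) - u x₀ - t * H₁ x₀ - t^2/2 * c11)
          + (u (x (2*t)) - u (x t) - t * H₂ x₀ - t^2 * c21 - t^2/2 * c22)|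
        ≤ |u (x t) - u x₀ - t * H₁ x₀ - t^2/2 * c11|
          + |u (x (2*t)) - u (x t) - t * H₂ x₀ - t^2 * c21 - t^2/2 * c22| := abs_add_le _ _
      _ ≤ ε' * t * t + 2 * ε' * t * t := add_le_add stepB stepE
      _ = ε * t^2 := by rw [hε'def]; ring
  rw [isLittleO_iff]
  intro c hc
  filter_upwards [key c hc, self_mem_nhdsWithin] with t hkey ht
  rw [Real.norm_eq_abs, Real.norm_eq_abs, abs_of_pos (pow_pos (show (0:ℝ) < t from ht) 2)]
  exact hkey

end SixteenHelpers

set_option maxHeartbeats 1000000 in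
/-- Proposition 5.1: expansion of `u` along a single-switch trajectory of a
nonlinear affine system, via the quadratic form of the extended matrix `K̃(x₀)` evaluated at the
concatenated vector `(1,a₁,1,a₂)`. -/


theorem statement16 {n m : ℕ} (σ₀ : Euc n → Euc n) (hσ₀ : ContDiff ℝ 1 σ₀)
    (σ : Fin m → Euc n → Euc n) (hσ : ∀ j, ContDiff ℝ 1 (σ j))
    (u : Euc n → ℝ) (hu : ContDiff ℝ 2 u)
    (a₁ a₂ : Euc m) (ha₁ : ‖a₁‖ ≤ 1) (ha₂ : ‖a₂‖ ≤ 1) (x₀ : Euc n)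
    (X : ℝ → ℝ → Euc n)
    (hX : ∀ t > (0 : ℝ),
      IsSwitchTraj (fun y => σ₀ y + ∑ j, a₁ j • σ j y)
        (fun y => σ₀ y + ∑ j, a₂ j • σ j y) t x₀ (X t)) :
    (fun t : ℝ => u (X t (2 * t)) - u x₀ -
        t * ⟪gradient u x₀, (2 : ℝ) • σ₀ x₀ + ∑ j, (a₁ j + a₂ j) • σ j x₀⟫ -
        t ^ 2 / 2 * (Kmat (Fin.cons σ₀ σ) u x₀ *ᵥ
            Sum.elim (Fin.cons 1 fun i => a₁ i) (Fin.cons 1 fun i => a₂ i) ⬝ᵥ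
          Sum.elim (Fin.cons 1 fun i => a₁ i) (Fin.cons 1 fun i => a₂ i)))
      =o[𝓝[>] (0 : ℝ)] fun t => t ^ 2 := by
  
  classical
  set σt : Fin (m + 1) → Euc n → Euc n := Fin.cons σ₀ σ with hσtdef
  set b₁ : Fin (m + 1) → ℝ := Fin.cons 1 (fun i => a₁ i) with hb₁def
  set b₂ : Fin (m + 1) → ℝ := Fin.cons 1 (fun i => a₂ i) with hb₂def
  set f₁ : Euc n → Euc n := fun y => σ₀ y + ∑ j, a₁ j • σ j y with hf₁def
  set f₂ : Euc n → Euc n := fun y => σ₀ y + ∑ j, a₂ j • σ j y with hf₂def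
  have hσti : ∀ i, ContDiff ℝ 1 (σt i) := by
    intro i
    refine Fin.cases ?_ ?_ i
    · simpa [hσtdef] using hσ₀
    · intro j; simpa [hσtdef] using hσ j
  have hf₁c : ContDiff ℝ 1 f₁ := hσ₀.add (ContDiff.sum fun j _ => (hσ j).const_smul (a₁ j))
  have hf₂c : ContDiff ℝ 1 f₂ := hσ₀.add (ContDiff.sum fun j _ => (hσ j).const_smul (a₂ j))
  set P : Euc n → Euc n →L[ℝ] ℝ := fderiv ℝ u with hPdef
  have hP : ContDiff ℝ 1 P := hu.fderiv_right (by norm_num)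
  have hudiff : Differentiable ℝ u := hu.differentiable (by norm_num)
  have hgrad : ∀ (y : Euc n) (v : Euc n), ⟪gradient u y, v⟫ = P y v := by
    intro y v
    rw [hPdef]
    simp [gradient, InnerProductSpace.toDual_symm_apply]
  set h : Fin (m + 1) → Euc n → ℝ := fun i y => P y (σt i y) with hhdef
  have hh : ∀ i, ContDiff ℝ 1 (h i) := fun i => hP.clm_apply (hσti i)
  set D : Fin (m + 1) → Euc n →L[ℝ] ℝ := fun i => fderiv ℝ (h i) x₀ with hDdef
  set H₁ : Euc n → ℝ := fun y => P y (f₁ y) with hH₁def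
  set H₂ : Euc n → ℝ := fun y => P y (f₂ y) with hH₂def
  have hH₁c : ContDiff ℝ 1 H₁ := hP.clm_apply hf₁c
  have hH₂c : ContDiff ℝ 1 H₂ := hP.clm_apply hf₂c
  set c11 : ℝ := fderiv ℝ H₁ x₀ (f₁ x₀) with hc11def
  set c21 : ℝ := fderiv ℝ H₂ x₀ (f₁ x₀) with hc21def
  set c22 : ℝ := fderiv ℝ H₂ x₀ (f₂ x₀) with hc22def
  -- expansion of the affine fields in the extended frame
  have hconsum : ∀ (c : ℝ) (v : Fin m → ℝ) (y : Euc n),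
      (∑ i, (Fin.cons c v : Fin (m+1) → ℝ) i • σt i y) = c • σ₀ y + ∑ j, v j • σ j y := by
    intro c v y
    rw [Fin.sum_univ_succ]
    simp [hσtdef]
  have hf₁sum : ∀ y, f₁ y = ∑ i, b₁ i • σt i y := by
    intro y; rw [hb₁def, hconsum, hf₁def]; simp
  have hf₂sum : ∀ y, f₂ y = ∑ i, b₂ i • σt i y := by
    intro y; rw [hb₂def, hconsum, hf₂def]; simp
  -- H as linear combination of the h i
  have hHsum : ∀ (b : Fin (m + 1) → ℝ) (y : Euc n),
      P y (∑ i, b i • σt i y) = ∑ i, b i * h i y := by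
    intro b y
    rw [map_sum]
    exact Finset.sum_congr rfl fun i _ => by
      rw [ContinuousLinearMap.map_smul]; rfl
  have hDer : ∀ b : Fin (m + 1) → ℝ,
      HasFDerivAt (fun y => P y (∑ i, b i • σt i y)) (∑ i, b i • D i) x₀ := by
    intro b
    have : HasFDerivAt (fun y => ∑ i, b i * h i y) (∑ i, b i • D i) x₀ := by
      refine HasFDerivAt.fun_sum fun i _ => ?_
      exact (((hh i).differentiable one_ne_zero x₀).hasFDerivAt).const_mul (b i)
    refine this.congr_of_eventuallyEq ?_
    filter_upwards with y using (hHsum b y)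
  have hSval : ∀ i j, Smat σt u x₀ i j = D i (σt j x₀) := by
    intro i j
    have : (fun y => ⟪gradient u y, σt i y⟫) = h i := by
      funext y; rw [hhdef]; exact hgrad y (σt i y)
    rw [Smat, Matrix.of_apply, this, hDdef]
  have hcval : ∀ (bk bl : Fin (m + 1) → ℝ),
      fderiv ℝ (fun y => P y (∑ i, bk i • σt i y)) x₀ (∑ j, bl j • σt j x₀)
        = ∑ i, ∑ j, bk i * bl j * D i (σt j x₀) := by
    intro bk bl
    rw [(hDer bk).fderiv, ContinuousLinearMap.sum_apply]
    refine Finset.sum_congr rfl fun i _ => ?_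
    simp only [ContinuousLinearMap.smul_apply, map_sum, Finset.smul_sum,
      ContinuousLinearMap.map_smul, smul_eq_mul]
    exact Finset.sum_congr rfl fun j _ => by ring
  have hHfun : ∀ (b : Fin (m+1) → ℝ) (g : Euc n → Euc n), (∀ y, g y = ∑ i, b i • σt i y) →
      (fun y => P y (g y)) = fun y => P y (∑ i, b i • σt i y) := by
    intro b g hg; funext y; rw [hg y]
  have hc11 : c11 = ∑ i, ∑ j, b₁ i * b₁ j * D i (σt j x₀) := by
    rw [hc11def, hH₁def, hHfun b₁ f₁ hf₁sum, hf₁sum, hcval]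
  have hc21 : c21 = ∑ i, ∑ j, b₂ i * b₁ j * D i (σt j x₀) := by
    rw [hc21def, hH₂def, hHfun b₂ f₂ hf₂sum, hf₁sum, hcval]
  have hc22 : c22 = ∑ i, ∑ j, b₂ i * b₂ j * D i (σt j x₀) := by
    rw [hc22def, hH₂def, hHfun b₂ f₂ hf₂sum, hf₂sum, hcval]
  have e2 : (Kmat σt u x₀ *ᵥ Sum.elim b₁ b₂) ⬝ᵥ Sum.elim b₁ b₂ = c11 + 2 * c21 + c22 := by
    have r1 : ∑ i, ∑ j, b₁ i * b₁ j * Smat σt u x₀ i j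
        = ∑ i, ∑ j, b₁ i * b₁ j * D i (σt j x₀) := dsum_congr fun i j => by rw [hSval]
    have r2 : ∑ i, ∑ j, b₂ i * b₁ j * Smat σt u x₀ i j
        = ∑ i, ∑ j, b₂ i * b₁ j * D i (σt j x₀) := dsum_congr fun i j => by rw [hSval]
    have r3 : ∑ i, ∑ j, b₂ i * b₂ j * Smat σt u x₀ i j
        = ∑ i, ∑ j, b₂ i * b₂ j * D i (σt j x₀) := dsum_congr fun i j => by rw [hSval]
    rw [Kmat, Kof_quad, r1, r2, r3, hc11, hc21, hc22]
  have e1 : ⟪gradient u x₀, (2 : ℝ) • σ₀ x₀ + ∑ j, (a₁ j + a₂ j) • σ j x₀⟫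
      = H₁ x₀ + H₂ x₀ := by
    rw [hgrad]
    have : (2 : ℝ) • σ₀ x₀ + ∑ j, (a₁ j + a₂ j) • σ j x₀ = f₁ x₀ + f₂ x₀ := by
      rw [hf₁def, hf₂def]
      simp only [two_smul, add_smul, Finset.sum_add_distrib]
      abel
    rw [this, map_add, hH₁def, hH₂def]

  -- derivative fields along the trajectory
  set G11 : Euc n → ℝ := fun y => fderiv ℝ H₁ y (f₁ y) with hG11def
  set G21 : Euc n → ℝ := fun y => fderiv ℝ H₂ y (f₁ y) with hG21def
  set G22 : Euc n → ℝ := fun y => fderiv ℝ H₂ y (f₂ y) with hG22def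
  have hG11c : Continuous G11 := (hH₁c.continuous_fderiv one_ne_zero).clm_apply hf₁c.continuous
  have hG21c : Continuous G21 := (hH₂c.continuous_fderiv one_ne_zero).clm_apply hf₁c.continuous
  have hG22c : Continuous G22 := (hH₂c.continuous_fderiv one_ne_zero).clm_apply hf₂c.continuous
  have hG11x : G11 x₀ = c11 := rfl
  have hG21x : G21 x₀ = c21 := rfl
  have hG22x : G22 x₀ = c22 := rfl
  simp only [e1, e2]
  exact key_est hf₁c.continuous hf₂c.continuous hu.continuous hH₁c.continuous hH₂c.continuous
    hG11c hG21c hG22c hG11x hG21x hG22x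
    (fun x s hx => (hudiff (x s)).hasFDerivAt.comp_hasDerivAt s hx)
    (fun x s hx => (hudiff (x s)).hasFDerivAt.comp_hasDerivAt s hx)
    (fun x s hx => ((hH₁c.differentiable one_ne_zero (x s)).hasFDerivAt).comp_hasDerivAt s hx)
    (fun x s hx => ((hH₂c.differentiable one_ne_zero (x s)).hasFDerivAt).comp_hasDerivAt s hx)
    (fun x s hx => ((hH₂c.differentiable one_ne_zero (x s)).hasFDerivAt).comp_hasDerivAt s hx)
    hX
end
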